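/- arXiv:1201.4465 — 9 statements merged into one kernel-verified Lean document; each statement's English description precedes it below -/
import Mathlib

section
/- For every R ≥ 0 and every α ∈ (-1, 1] there exists a constant C (depending only on R and α) such that for all integers n, j with n ≥ max(2R, 1) and 1 ≤ j ≤ n one has j · | ∫₀^∞ (1 − (t n / j)^α) · e^{R t} · (n^j / (j−1)!) · t^{j−1} · e^{−n t} dt | ≤ C. (This is the verification that the exponential measures dμ_n(t) = n e^{−nt} dt, whose j-fold convolutions are the Gamma densities t ↦ (n^j/(j−1)!) t^{j−1} e^{−nt}, satisfy condition (M3), which underlies the convergence analysis of the implicit Euler scheme.) -/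
open MeasureTheory

/-- Log-convexity consequence: `Γ(x+δ) ≤ Γ(x) x^δ` for `δ ∈ [0,1]`. -/
lemma gammaU1 {x δ : ℝ} (hx : 0 < x) (h0 : 0 ≤ δ) (h1 : δ ≤ 1) :
    Real.Gamma (x + δ) ≤ Real.Gamma x * x ^ δ := by
  rcases eq_or_lt_of_le h0 with h | h0'
  · simp [← h]
  rcases eq_or_lt_of_le h1 with h | h1'
  · subst h
    rw [Real.Gamma_add_one hx.ne', Real.rpow_one, mul_comm]
  · have key := Real.Gamma_mul_add_mul_le_rpow_Gamma_mul_rpow_Gamma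
      (s := x + 1) (t := x) (a := δ) (b := 1 - δ) (by positivity) hx h0' (by linarith)
      (by ring)
    have h2 : δ * (x + 1) + (1 - δ) * x = x + δ := by ring
    rw [h2] at key
    have h3 : Real.Gamma (x + 1) = x * Real.Gamma x := Real.Gamma_add_one hx.ne'
    have hg : 0 < Real.Gamma x := Real.Gamma_pos_of_pos hx
    calc Real.Gamma (x + δ) ≤ Real.Gamma (x + 1) ^ δ * Real.Gamma x ^ (1 - δ) := key
      _ = x ^ δ * (Real.Gamma x ^ δ * Real.Gamma x ^ (1 - δ)) := by
          rw [h3, Real.mul_rpow hx.le hg.le]; ring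
      _ = x ^ δ * Real.Gamma x ^ (δ + (1 - δ)) := by rw [Real.rpow_add hg]
      _ = Real.Gamma x * x ^ δ := by norm_num [mul_comm]

/-- The key Gamma-ratio estimate: `|1 - j^{-α} Γ(j+α)/Γ(j)| ≤ (3 + Γ(1+α))/j`. -/
lemma A_bound (α : ℝ) (hα₁ : -1 < α) (hα₂ : α ≤ 1) {j : ℕ} (hj : 1 ≤ j) :
    |1 - (1 / (j : ℝ)) ^ α * (Real.Gamma ((j : ℝ) + α) / Real.Gamma (j : ℝ))|
      ≤ (3 + Real.Gamma (1 + α)) / (j : ℝ) := by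
  have hΓ1 : 0 ≤ Real.Gamma (1 + α) := (Real.Gamma_pos_of_pos (by linarith)).le
  rcases eq_or_lt_of_le hj with h1 | h2
  · -- j = 1
    have : (j : ℝ) = 1 := by exact_mod_cast h1.symm
    rw [this]
    simp only [Real.Gamma_one, one_div, inv_one, Real.one_rpow, div_one, one_mul]
    rw [abs_le]
    constructor <;> linarith
  · -- j ≥ 2
    have hy2 : (2 : ℝ) ≤ (j : ℝ) := by exact_mod_cast h2
    set y : ℝ := (j : ℝ) with hy
    have hy0 : 0 < y := by linarith
    have hy1 : 1 < y := by linarith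
    have hyα : 0 < y + α := by linarith
    have hΓy : 0 < Real.Gamma y := Real.Gamma_pos_of_pos hy0
    have hΓyα : 0 < Real.Gamma (y + α) := Real.Gamma_pos_of_pos hyα
    have hinv : 0 < (1 / y) ^ α := Real.rpow_pos_of_pos (by positivity) _
    set A : ℝ := (1 / y) ^ α * (Real.Gamma (y + α) / Real.Gamma y) with hA
    have hbase0 : 0 < (y - 1) / y := div_pos (by linarith) hy0
    have hbase1 : (y - 1) / y ≤ 1 := by
      rw [div_le_one hy0]; linarith
    have key : 1 - 2 / y ≤ A ∧ A ≤ 1 + 2 / y := by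
      rcases le_or_gt 0 α with hα0 | hα0
      · -- α ∈ [0,1]
        constructor
        · -- lower bound
          have hx0 : 0 < y - 1 + α := by linarith
          have hU : Real.Gamma y ≤ Real.Gamma (y - 1 + α) * (y - 1 + α) ^ (1 - α) := by
            have := gammaU1 (x := y - 1 + α) (δ := 1 - α) hx0 (by linarith) (by linarith)
            convert this using 2; ring
          have hadd : Real.Gamma (y + α) = (y - 1 + α) * Real.Gamma (y - 1 + α) := by
            have := Real.Gamma_add_one (s := y - 1 + α) hx0.ne'
            convert this using 2; ring
          have hlow : Real.Gamma y * (y - 1 + α) ^ α ≤ Real.Gamma (y + α) := by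
            calc Real.Gamma y * (y - 1 + α) ^ α
                ≤ Real.Gamma (y - 1 + α) * (y - 1 + α) ^ (1 - α) * (y - 1 + α) ^ α := by
                  gcongr
              _ = Real.Gamma (y - 1 + α) * (y - 1 + α) ^ ((1 - α) + α) := by
                  rw [Real.rpow_add hx0]; ring
              _ = Real.Gamma (y + α) := by
                  rw [hadd]; norm_num [Real.rpow_one]; ring
          have hQ : (y - 1 + α) ^ α ≤ Real.Gamma (y + α) / Real.Gamma y := by
            rw [le_div_iff₀ hΓy]; linarith [hlow]
          have hA1 : ((y - 1 + α) / y) ^ α ≤ A := by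
            have : ((y - 1 + α) / y) ^ α = (1 / y) ^ α * (y - 1 + α) ^ α := by
              rw [← Real.mul_rpow (by positivity) hx0.le]
              congr 1; field_simp
            rw [this, hA]
            gcongr
          have hA2 : ((y - 1) / y) ^ α ≤ ((y - 1 + α) / y) ^ α := by
            apply Real.rpow_le_rpow hbase0.le _ hα0
            gcongr; linarith
          have hA3 : (y - 1) / y ≤ ((y - 1) / y) ^ α := by
            calc (y - 1) / y = ((y - 1) / y) ^ (1 : ℝ) := (Real.rpow_one _).symm
              _ ≤ ((y - 1) / y) ^ α := Real.rpow_le_rpow_of_exponent_ge hbase0 hbase1 hα₂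
          have hlast : 1 - 2 / y ≤ (y - 1) / y := by
            rw [le_div_iff₀ hy0]
            have h2 : (2:ℝ) / y * y = 2 := div_mul_cancel₀ _ hy0.ne'
            nlinarith [h2]
          linarith [hA1, hA2, hA3, hlast]
        · -- upper bound: A ≤ 1
          have hU : Real.Gamma (y + α) ≤ Real.Gamma y * y ^ α := gammaU1 hy0 hα0 hα₂
          have hJ : A ≤ (1 / y) ^ α * y ^ α := by
            rw [hA]
            gcongr
            rw [div_le_iff₀ hΓy]; linarith [hU]
          have : (1 / y) ^ α * y ^ α = 1 := by
            rw [← Real.mul_rpow (by positivity) hy0.le]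
            rw [one_div_mul_cancel hy0.ne', Real.one_rpow]
          rw [this] at hJ
          have h2y : 0 ≤ 2 / y := by positivity
          linarith
      · -- α ∈ (-1, 0)
        constructor
        · -- lower bound: 1 ≤ A
          have hU : Real.Gamma y ≤ Real.Gamma (y + α) * (y + α) ^ (-α) := by
            have := gammaU1 (x := y + α) (δ := -α) hyα (by linarith) (by linarith)
            convert this using 2; ring
          have hlow : Real.Gamma y * (y + α) ^ α ≤ Real.Gamma (y + α) := by
            calc Real.Gamma y * (y + α) ^ α
                ≤ Real.Gamma (y + α) * (y + α) ^ (-α) * (y + α) ^ α := by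
                  gcongr
              _ = Real.Gamma (y + α) * (y + α) ^ (-α + α) := by
                  rw [Real.rpow_add hyα]; ring
              _ = Real.Gamma (y + α) := by norm_num
          have hQ : (y + α) ^ α ≤ Real.Gamma (y + α) / Real.Gamma y := by
            rw [le_div_iff₀ hΓy]; linarith [hlow]
          have hA1 : ((y + α) / y) ^ α ≤ A := by
            have : ((y + α) / y) ^ α = (1 / y) ^ α * (y + α) ^ α := by
              rw [← Real.mul_rpow (by positivity) hyα.le]
              congr 1; field_simp
            rw [this, hA]
            gcongr
          have hA2 : (1 : ℝ) ≤ ((y + α) / y) ^ α :=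
            Real.one_le_rpow_of_pos_of_le_one_of_nonpos (by positivity)
              (by rw [div_le_one hy0]; linarith) hα0.le
          have h2y : 0 ≤ 2 / y := by positivity
          linarith
        · -- upper bound
          have hx0 : 0 < y - 1 := by linarith
          have hU : Real.Gamma (y + α) ≤ Real.Gamma (y - 1) * (y - 1) ^ (1 + α) := by
            have := gammaU1 (x := y - 1) (δ := 1 + α) hx0 (by linarith) (by linarith)
            convert this using 2; ring
          have hadd : Real.Gamma y = (y - 1) * Real.Gamma (y - 1) := by
            have := Real.Gamma_add_one (s := y - 1) hx0.ne'
            convert this using 2; ring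
          have hup : Real.Gamma (y + α) ≤ Real.Gamma y * (y - 1) ^ α := by
            calc Real.Gamma (y + α) ≤ Real.Gamma (y - 1) * (y - 1) ^ (1 + α) := hU
              _ = Real.Gamma (y - 1) * ((y - 1) ^ (1:ℝ) * (y - 1) ^ α) := by
                  rw [← Real.rpow_add hx0]
              _ = Real.Gamma y * (y - 1) ^ α := by
                  rw [hadd, Real.rpow_one]; ring
          have hA1 : A ≤ ((y - 1) / y) ^ α := by
            have : ((y - 1) / y) ^ α = (1 / y) ^ α * (y - 1) ^ α := by
              rw [← Real.mul_rpow (by positivity) hx0.le]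
              congr 1; field_simp
            rw [this, hA]
            gcongr
            rw [div_le_iff₀ hΓy]; linarith [hup]
          have hA2 : ((y - 1) / y) ^ α ≤ ((y - 1) / y) ^ (-1 : ℝ) :=
            Real.rpow_le_rpow_of_exponent_ge hbase0 hbase1 hα₁.le
          have hA3 : ((y - 1) / y) ^ (-1 : ℝ) = y / (y - 1) := by
            rw [Real.rpow_neg_one]
            field_simp
          have : y / (y - 1) ≤ 1 + 2 / y := by
            rw [div_le_iff₀ hx0]
            have hinv2 : (2:ℝ) / y * y = 2 := div_mul_cancel₀ _ hy0.ne'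
            have h2 : (2:ℝ) / y ≤ 1 := by rw [div_le_one hy0]; linarith
            nlinarith [hinv2, h2]
          calc A ≤ ((y - 1) / y) ^ α := hA1
            _ ≤ ((y - 1) / y) ^ (-1 : ℝ) := hA2
            _ = y / (y - 1) := hA3
            _ ≤ 1 + 2 / y := this
    rw [abs_le]
    constructor
    · have : 2 / y ≤ (3 + Real.Gamma (1 + α)) / y := by gcongr; linarith
      linarith [key.2]
    · have : 2 / y ≤ (3 + Real.Gamma (1 + α)) / y := by gcongr; linarith
      linarith [key.1]

lemma integrable_aux {p b : ℝ} (hp : -1 < p) (hb : 0 < b) :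
    IntegrableOn (fun t : ℝ => t ^ p * Real.exp (-(b * t))) (Set.Ioi 0) := by
  have := integrableOn_rpow_mul_exp_neg_mul_rpow hp (by norm_num : (0:ℝ) < 1) hb
  refine this.congr_fun (fun t ht => ?_) measurableSet_Ioi
  simp only [Real.rpow_one]
  ring_nf

lemma integral_eval (α : ℝ) (hα₁ : -1 < α) (R : ℝ) (hR : 0 ≤ R) (n j : ℕ)
    (hj : 1 ≤ j) (hjn : j ≤ n) (hn2 : 2 * R ≤ (n : ℝ)) (hn1 : 1 ≤ (n : ℝ)) :
    ∫ t in Set.Ioi (0 : ℝ),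
        (1 - (t * (n : ℝ) / (j : ℝ)) ^ α) * Real.exp (R * t) *
          ((n : ℝ) ^ j / (Nat.factorial (j - 1) : ℝ) * t ^ (j - 1) *
            Real.exp (-(n : ℝ) * t))
      = ((n : ℝ) / ((n : ℝ) - R)) ^ j *
          (1 - ((n : ℝ) / ((j : ℝ) * ((n : ℝ) - R))) ^ α *
            (Real.Gamma ((j : ℝ) + α) / Real.Gamma (j : ℝ))) := by
  set x : ℝ := (n : ℝ) with hx
  set y : ℝ := (j : ℝ) with hy
  have hy1 : 1 ≤ y := by rw [hy]; exact_mod_cast hj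
  have hy0 : 0 < y := by linarith
  have hx0 : 0 < x := by linarith
  have hb : 0 < x - R := by linarith
  set b : ℝ := x - R with hbdef
  set K : ℝ := x ^ j / (Nat.factorial (j - 1) : ℝ) with hK
  have hyα : 0 < y + α := by linarith
  -- rewrite the integrand
  have hcast : ((j - 1 : ℕ) : ℝ) = y - 1 := by
    rw [hy, Nat.cast_sub hj, Nat.cast_one]
  have step1 : ∀ t : ℝ, t ∈ Set.Ioi (0 : ℝ) →
      (1 - (t * x / y) ^ α) * Real.exp (R * t) * (K * t ^ (j - 1) * Real.exp (-x * t))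
        = K * (t ^ (y - 1) * Real.exp (-(b * t)))
          - (K * (x / y) ^ α) * (t ^ (y + α - 1) * Real.exp (-(b * t))) := by
    intro t ht
    have ht0 : 0 < t := ht
    have hnp : (t : ℝ) ^ (j - 1) = t ^ (y - 1) := by
      rw [← hcast, Real.rpow_natCast]
    have hexp : Real.exp (-(b * t)) = Real.exp (R * t) * Real.exp (-x * t) := by
      rw [← Real.exp_add]; congr 1; rw [hbdef]; ring
    have hsplit : (t * x / y) ^ α = t ^ α * (x / y) ^ α := by
      rw [mul_div_assoc, Real.mul_rpow ht0.le (by positivity)]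
    have hsum : t ^ (y + α - 1) = t ^ (y - 1) * t ^ α := by
      rw [← Real.rpow_add ht0]; congr 1; ring
    rw [hnp, hexp, hsplit, hsum]
    ring
  rw [setIntegral_congr_fun measurableSet_Ioi step1]
  have int1 : IntegrableOn (fun t : ℝ => K * (t ^ (y - 1) * Real.exp (-(b * t))))
      (Set.Ioi 0) := (integrable_aux (by linarith) hb).const_mul K
  have int2 : IntegrableOn
      (fun t : ℝ => (K * (x / y) ^ α) * (t ^ (y + α - 1) * Real.exp (-(b * t))))
      (Set.Ioi 0) := (integrable_aux (by linarith) hb).const_mul _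
  rw [integral_sub int1 int2, integral_const_mul, integral_const_mul]
  have e1 : ∫ t in Set.Ioi (0:ℝ), t ^ (y - 1) * Real.exp (-(b * t))
      = (1 / b) ^ y * Real.Gamma y := Real.integral_rpow_mul_exp_neg_mul_Ioi hy0 hb
  have e2 : ∫ t in Set.Ioi (0:ℝ), t ^ (y + α - 1) * Real.exp (-(b * t))
      = (1 / b) ^ (y + α) * Real.Gamma (y + α) := by
    have := Real.integral_rpow_mul_exp_neg_mul_Ioi hyα hb
    convert this using 3 <;> ring_nf
  rw [e1, e2]
  -- now pure algebra with rpow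
  have hΓy : Real.Gamma y = (Nat.factorial (j - 1) : ℝ) := by
    have h : y = ((j - 1 : ℕ) : ℝ) + 1 := by rw [hcast]; ring
    rw [h, Real.Gamma_nat_eq_factorial]
  have hfac : (0 : ℝ) < (Nat.factorial (j - 1) : ℝ) := by positivity
  have hry : (1 / b) ^ y = (1 / b) ^ (j : ℕ) := by
    rw [hy, Real.rpow_natCast]
  have hsplit2 : (1 / b) ^ (y + α) = (1 / b) ^ y * (1 / b) ^ α :=
    Real.rpow_add (by positivity) _ _
  have hxyb : (x / y) ^ α * (1 / b) ^ α = (x / (y * b)) ^ α := by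
    rw [← Real.mul_rpow (by positivity) (by positivity)]
    congr 1; field_simp
  have hdp : (x / b) ^ j = x ^ j * (1 / b) ^ j := by
    rw [div_eq_mul_one_div, mul_pow]
  have hT1 : K * ((1 / b) ^ y * Real.Gamma y) = (x / b) ^ j := by
    rw [hΓy, hry, hK, hdp]
    field_simp
  have hT2 : (K * (x / y) ^ α) * ((1 / b) ^ (y + α) * Real.Gamma (y + α))
      = (x / b) ^ j * ((x / (y * b)) ^ α * (Real.Gamma (y + α) / Real.Gamma y)) := by
    rw [hsplit2, hry, hΓy, ← hxyb, hK, hdp]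
    field_simp
  rw [hT2, ← hT1]
  ring

/-- Verification of condition (M3) for the exponential measures `dμ_n(t) = n e^{-nt} dt`,
whose `j`-fold convolutions have densities `t ↦ (n^j/(j-1)!) t^(j-1) e^{-nt}`:
for every `R ≥ 0` and `α ∈ (-1, 1]` there is a constant `C` such that for all
`n ≥ max (2R) 1` and `1 ≤ j ≤ n`,
`j * |∫₀^∞ (1 - (tn/j)^α) e^{Rt} (n^j/(j-1)!) t^(j-1) e^{-nt} dt| ≤ C`. -/
theorem stmt0 (R : ℝ) (hR : 0 ≤ R) (α : ℝ) (hα₁ : -1 < α) (hα₂ : α ≤ 1) :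
    ∃ C : ℝ, ∀ n j : ℕ, max (2 * R) 1 ≤ (n : ℝ) → 1 ≤ j → j ≤ n →
      (j : ℝ) *
        |∫ t in Set.Ioi (0 : ℝ),
            (1 - (t * (n : ℝ) / (j : ℝ)) ^ α) * Real.exp (R * t) *
              ((n : ℝ) ^ j / (Nat.factorial (j - 1) : ℝ) * t ^ (j - 1) *
                Real.exp (-(n : ℝ) * t))| ≤ C := by
  refine ⟨Real.exp (2 * R) * (2 * (3 + Real.Gamma (1 + α)) + 2 * R), fun n j hn hj hjn => ?_⟩
  have hx2 : 2 * R ≤ (n : ℝ) := le_trans (le_max_left _ _) hn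
  have hx1 : 1 ≤ (n : ℝ) := le_trans (le_max_right _ _) hn
  rw [integral_eval α hα₁ R hR n j hj hjn hx2 hx1]
  set x : ℝ := (n : ℝ) with hxd
  set y : ℝ := (j : ℝ) with hyd
  set b : ℝ := x - R with hbd
  have hy1 : 1 ≤ y := by rw [hyd]; exact_mod_cast hj
  have hy0 : 0 < y := by linarith
  have hx0 : 0 < x := by linarith
  have hyx : y ≤ x := by rw [hyd, hxd]; exact_mod_cast hjn
  have hb : 0 < b := by rw [hbd]; linarith
  have hx2b : x ≤ 2 * b := by rw [hbd]; linarith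
  have hxb1 : 1 ≤ x / b := (one_le_div hb).mpr (by rw [hbd]; linarith)
  have hΓ1 : 0 ≤ Real.Gamma (1 + α) := (Real.Gamma_pos_of_pos (by linarith)).le
  set D : ℝ := (x / b) ^ α with hDd
  set A : ℝ := (1 / y) ^ α * (Real.Gamma (y + α) / Real.Gamma y) with hAd
  have hsplitE : (x / (y * b)) ^ α * (Real.Gamma (y + α) / Real.Gamma y) = D * A := by
    rw [hAd, hDd, ← mul_assoc, ← Real.mul_rpow (by positivity) (by positivity)]
    congr 2
    field_simp
  rw [hsplitE]
  -- bound on the power factor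
  have hub : x / b ≤ Real.exp (2 * R / x) := by
    rw [div_le_iff₀ hb]
    have he := Real.add_one_le_exp (2 * R / x)
    have hq : 2 * R / x * x = 2 * R := div_mul_cancel₀ _ hx0.ne'
    have hu1 : 2 * R / x ≤ 1 := by rw [div_le_one hx0]; linarith
    nlinarith [mul_nonneg (by linarith [he] : (0:ℝ) ≤ Real.exp (2 * R / x) - (2 * R / x + 1)) hb.le,
      mul_le_mul_of_nonneg_right hu1 hR]
  have bound1 : (x / b) ^ j ≤ Real.exp (2 * R) := by
    calc (x / b) ^ j ≤ Real.exp (2 * R / x) ^ j :=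
          pow_le_pow_left₀ (by positivity) hub j
      _ = Real.exp ((j : ℝ) * (2 * R / x)) := (Real.exp_nat_mul _ j).symm
      _ ≤ Real.exp (2 * R) := by
          apply Real.exp_le_exp.mpr
          have h1 : y / x ≤ 1 := by rw [div_le_one hx0]; linarith
          have h2 : (j : ℝ) * (2 * R / x) = 2 * R * (y / x) := by rw [← hyd]; ring
          rw [h2]
          exact mul_le_of_le_one_right (by positivity) h1
  -- bounds on D
  have hD0 : 0 ≤ D := (Real.rpow_pos_of_pos (by positivity) _).le
  have hDle : D ≤ x / b := by
    calc D ≤ (x / b) ^ (1 : ℝ) := Real.rpow_le_rpow_of_exponent_le hxb1 hα₂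
      _ = x / b := Real.rpow_one _
  have hD2 : D ≤ 2 := by
    refine hDle.trans ?_
    rw [div_le_iff₀ hb]; linarith
  have hxbR : x / b - 1 ≤ 2 * R / x := by
    have h1 : x / b - 1 = R / b := by field_simp; rw [hbd]; ring
    rw [h1, div_le_div_iff₀ hb hx0]
    nlinarith [mul_nonneg hR (sub_nonneg.mpr hx2)]
  have hD3 : |1 - D| ≤ 2 * R / x := by
    rcases le_or_gt 0 α with hα0 | hα0
    · have hDa : 1 ≤ D := Real.one_le_rpow hxb1 hα0
      rw [abs_of_nonpos (by linarith)]
      linarith [hDle, hxbR]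
    · have hDa : D ≤ 1 := Real.rpow_le_one_of_one_le_of_nonpos hxb1 hα0.le
      have hDb : b / x ≤ D := by
        have h1 : (x / b) ^ (-1 : ℝ) ≤ D := Real.rpow_le_rpow_of_exponent_le hxb1 (by linarith)
        rwa [Real.rpow_neg_one, inv_div] at h1
      rw [abs_of_nonneg (by linarith)]
      have h2 : 1 - b / x = R / x := by field_simp; rw [hbd]; ring
      have h3 : R / x ≤ 2 * R / x := by gcongr <;> linarith
      linarith
  -- bound on A
  have hA : |1 - A| ≤ (3 + Real.Gamma (1 + α)) / y := by
    rw [hAd, hyd]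
    exact A_bound α hα₁ hα₂ hj
  have hyA : y * |1 - A| ≤ 3 + Real.Gamma (1 + α) := by
    rw [mul_comm]
    exact (le_div_iff₀ hy0).mp hA
  -- combine
  have habs : |1 - D * A| ≤ |1 - A| * D + |1 - D| := by
    have h1 : 1 - D * A = (1 - A) * D + (1 - D) := by ring
    rw [h1]
    calc |(1 - A) * D + (1 - D)| ≤ |(1 - A) * D| + |1 - D| := abs_add_le _ _
      _ = |1 - A| * D + |1 - D| := by rw [abs_mul, abs_of_nonneg hD0]
  have bound2 : y * |1 - D * A| ≤ 2 * (3 + Real.Gamma (1 + α)) + 2 * R := by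
    have t1 : y * (|1 - A| * D) ≤ (3 + Real.Gamma (1 + α)) * 2 := by
      rw [← mul_assoc]
      exact mul_le_mul hyA hD2 hD0 (by linarith)
    have t2 : y * |1 - D| ≤ 2 * R := by
      have h1 : y * |1 - D| ≤ y * (2 * R / x) := by
        exact mul_le_mul_of_nonneg_left hD3 hy0.le
      have h2 : y * (2 * R / x) = 2 * R * (y / x) := by ring
      have h3 : y / x ≤ 1 := by rw [div_le_one hx0]; linarith
      have h4 : 2 * R * (y / x) ≤ 2 * R := mul_le_of_le_one_right (by positivity) h3
      linarith
    have hcomb := mul_le_mul_of_nonneg_left habs hy0.le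
    have hsum : y * (|1 - A| * D + |1 - D|) = y * (|1 - A| * D) + y * |1 - D| := by ring
    linarith [hcomb, t1, t2]
  have hpownn : (0 : ℝ) ≤ (x / b) ^ j := by positivity
  calc y * |(x / b) ^ j * (1 - D * A)|
      = (x / b) ^ j * (y * |1 - D * A|) := by
        rw [abs_mul, abs_of_nonneg hpownn]; ring
    _ ≤ Real.exp (2 * R) * (2 * (3 + Real.Gamma (1 + α)) + 2 * R) := by
        apply mul_le_mul bound1 bound2 (by positivity) (Real.exp_pos _).le
end

section
/- For every integer j ≥ 2 and every x ∈ [−1, 1] with x ≠ 0 one has 0 ≤ (1/x) · (1 − Γ(j+x) / (j^x · Γ(j))) ≤ 1/(j−1). In particular Γ(j+x) ≤ j^x Γ(j) for x ∈ (0,1] and Γ(j+x) ≥ j^x Γ(j) · (1 − |x|/(j−1)) for x ∈ [−1,0). -/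
open Real

section Aux

variable {n x : ℝ}

/-- A: for `2 ≤ n`, `0 < x ≤ 1`, `Γ(n+x) ≤ n^x Γ(n)`. -/
lemma gammaA (hn : 2 ≤ n) (hx0 : 0 < x) (hx1 : x ≤ 1) :
    Gamma (n + x) ≤ n ^ x * Gamma n := by
  have hn0 : (0:ℝ) < n := by linarith
  have hG : 0 < Gamma n := Gamma_pos_of_pos hn0
  rcases eq_or_lt_of_le hx1 with rfl | hx1
  · rw [Gamma_add_one hn0.ne', rpow_one]
  · have key := Gamma_mul_add_mul_le_rpow_Gamma_mul_rpow_Gamma (s := n) (t := n + 1)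
      hn0 (by linarith) (by linarith : (0:ℝ) < 1 - x) hx0 (by ring)
    have harg : (1 - x) * n + x * (n + 1) = n + x := by ring
    rw [harg, Gamma_add_one hn0.ne', mul_rpow hn0.le hG.le] at key
    calc Gamma (n + x) ≤ Gamma n ^ (1 - x) * (n ^ x * Gamma n ^ x) := key
      _ = n ^ x * Gamma n := by
          rw [mul_comm (Gamma n ^ (1 - x)), mul_assoc, ← rpow_add hG]
          norm_num

/-- B: for `2 ≤ n`, `-1 ≤ x < 0`, `n^x Γ(n) ≤ Γ(n+x)`. -/
lemma gammaB (hn : 2 ≤ n) (hx0 : -1 ≤ x) (hx1 : x < 0) :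
    n ^ x * Gamma n ≤ Gamma (n + x) := by
  have hn0 : (0:ℝ) < n := by linarith
  have hG : 0 < Gamma n := Gamma_pos_of_pos hn0
  have hnx : 0 < n + x := by linarith
  have hGx : 0 < Gamma (n + x) := Gamma_pos_of_pos hnx
  have h1x : (0:ℝ) < 1 - x := by linarith
  have key := Gamma_mul_add_mul_le_rpow_Gamma_mul_rpow_Gamma (s := n + x) (t := n + 1)
      hnx (by linarith) (a := 1 / (1 - x)) (b := -x / (1 - x))
      (by positivity) (div_pos (by linarith) h1x) (by field_simp; ring)
  have harg : 1 / (1 - x) * (n + x) + -x / (1 - x) * (n + 1) = n := by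
    field_simp; ring
  rw [harg] at key
  have hG1 : (0:ℝ) ≤ Gamma (n + 1) := (Gamma_pos_of_pos (by linarith)).le
  have e1 : 1 / (1 - x) * (1 - x) = 1 := by field_simp
  have e2 : -x / (1 - x) * (1 - x) = -x := by field_simp
  have key2 : Gamma n ^ (1 - x) ≤ Gamma (n + x) * Gamma (n + 1) ^ (-x) := by
    have := rpow_le_rpow hG.le key h1x.le
    rwa [mul_rpow (rpow_nonneg hGx.le _) (rpow_nonneg hG1 _),
      ← rpow_mul hGx.le, ← rpow_mul hG1, e1, e2, rpow_one] at this
  -- now rearrange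
  rw [Gamma_add_one hn0.ne'] at key2
  have hP : 0 < (n * Gamma n) ^ (-x) := rpow_pos_of_pos (by positivity) _
  have : Gamma n ^ (1 - x) / (n * Gamma n) ^ (-x) ≤ Gamma (n + x) :=
    (div_le_iff₀ hP).mpr key2
  calc n ^ x * Gamma n = Gamma n ^ (1 - x) / (n * Gamma n) ^ (-x) := by
        rw [rpow_neg (by positivity), div_eq_mul_inv, inv_inv, mul_rpow hn0.le hG.le]
        have hgg : Gamma n ^ (1 - x) * Gamma n ^ x = Gamma n := by
          rw [← rpow_add hG]; norm_num
        linear_combination (-(n ^ x)) * hgg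
    _ ≤ Gamma (n + x) := this

/-- C: for `2 ≤ n`, `0 < x ≤ 1`, `n^x Γ(n) (1 - x/(n-1)) ≤ Γ(n+x)`. -/
lemma gammaC (hn : 2 ≤ n) (hx0 : 0 < x) (hx1 : x ≤ 1) :
    n ^ x * Gamma n * (1 - x / (n - 1)) ≤ Gamma (n + x) := by
  have hn0 : (0:ℝ) < n := by linarith
  have hn1 : (0:ℝ) < n - 1 := by linarith
  have hG : 0 < Gamma n := Gamma_pos_of_pos hn0
  have hGm : Gamma (n - 1) = Gamma n / (n - 1) := by
    have := Gamma_add_one (s := n - 1) (by positivity)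
    rw [sub_add_cancel] at this
    rw [this]; field_simp
  have hnx : 0 < n + x := by linarith
  have hGx : 0 < Gamma (n + x) := Gamma_pos_of_pos hnx
  have h1x : (0:ℝ) < 1 + x := by linarith
  -- Step 1 : Γ(n) (n-1)^x ≤ Γ(n+x)
  have key := Gamma_mul_add_mul_le_rpow_Gamma_mul_rpow_Gamma (s := n - 1) (t := n + x)
      hn1 hnx (a := x / (1 + x)) (b := 1 / (1 + x))
      (by positivity) (by positivity) (by field_simp; ring)
  have harg : x / (1 + x) * (n - 1) + 1 / (1 + x) * (n + x) = n := by
    field_simp; ring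
  rw [harg] at key
  have hGm1 : (0:ℝ) ≤ Gamma (n - 1) := (Gamma_pos_of_pos hn1).le
  have e1 : x / (1 + x) * (1 + x) = x := by field_simp
  have e2 : 1 / (1 + x) * (1 + x) = 1 := by field_simp
  have key2 : Gamma n ^ (1 + x) ≤ Gamma (n - 1) ^ x * Gamma (n + x) := by
    have := rpow_le_rpow hG.le key h1x.le
    rwa [mul_rpow (rpow_nonneg hGm1 _) (rpow_nonneg hGx.le _),
      ← rpow_mul hGm1, ← rpow_mul hGx.le, e1, e2, rpow_one] at this
  have step1 : Gamma n * (n - 1) ^ x ≤ Gamma (n + x) := by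
    rw [hGm, div_rpow hG.le hn1.le] at key2
    have hpx : 0 < Gamma n ^ x := rpow_pos_of_pos hG x
    have h3 : Gamma n ^ x * (Gamma n * (n - 1) ^ x) ≤ Gamma n ^ x * Gamma (n + x) := by
      have hgg : Gamma n ^ (1 + x) = Gamma n * Gamma n ^ x := by
        rw [rpow_add hG, rpow_one]
      rw [div_mul_eq_mul_div, le_div_iff₀ (rpow_pos_of_pos hn1 x), hgg] at key2
      nlinarith [key2]
    exact le_of_mul_le_mul_left h3 hpx
  -- Step 2 : n^x (1 - x/(n-1)) ≤ (n-1)^x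
  have step2 : n ^ x * (1 - x / (n - 1)) ≤ (n - 1) ^ x := by
    have hb := rpow_one_add_le_one_add_mul_self (s := 1 / (n - 1))
      (le_trans (by norm_num) (by positivity : (0:ℝ) ≤ 1 / (n - 1)))  hx0.le hx1
    have e3 : (1 : ℝ) + 1 / (n - 1) = n / (n - 1) := by field_simp; ring
    rw [e3] at hb
    have e4 : (n / (n - 1)) ^ x = n ^ x / (n - 1) ^ x := div_rpow hn0.le hn1.le x
    rw [e4] at hb
    have hp1 : (0:ℝ) < (n - 1) ^ x := rpow_pos_of_pos hn1 x
    rw [div_le_iff₀ hp1] at hb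
    -- hb : n ^ x ≤ (1 + x * (1/(n-1))) * (n-1)^x
    have ht0 : 0 ≤ x / (n - 1) := by positivity
    have ht1 : x / (n - 1) ≤ 1 := by
      rw [div_le_one hn1]; linarith
    have e5 : x * (1 / (n - 1)) = x / (n - 1) := by ring
    rw [e5] at hb
    nlinarith [mul_le_mul_of_nonneg_right hb (by linarith : 0 ≤ 1 - x / (n - 1)),
      sq_nonneg (x / (n - 1)), hp1.le]
  calc n ^ x * Gamma n * (1 - x / (n - 1)) = Gamma n * (n ^ x * (1 - x / (n - 1))) := by ring
    _ ≤ Gamma n * (n - 1) ^ x := mul_le_mul_of_nonneg_left step2 hG.le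
    _ ≤ Gamma (n + x) := step1

/-- D: for `2 ≤ n`, `-1 ≤ x < 0`, `Γ(n+x) ≤ n^x Γ(n) (1 - x/(n-1))`. -/
lemma gammaD (hn : 2 ≤ n) (hx0 : -1 ≤ x) (hx1 : x < 0) :
    Gamma (n + x) ≤ n ^ x * Gamma n * (1 - x / (n - 1)) := by
  have hn0 : (0:ℝ) < n := by linarith
  have hn1 : (0:ℝ) < n - 1 := by linarith
  have hG : 0 < Gamma n := Gamma_pos_of_pos hn0
  have hGm : Gamma (n - 1) = Gamma n / (n - 1) := by
    have := Gamma_add_one (s := n - 1) (by positivity)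
    rw [sub_add_cancel] at this
    rw [this]; field_simp
  have hnx : 0 < n + x := by linarith
  -- Step 1 : Γ(n+x) ≤ Γ(n) (n-1)^x
  have step1 : Gamma (n + x) ≤ Gamma n * (n - 1) ^ x := by
    rcases eq_or_lt_of_le hx0 with rfl | hx0'
    · rw [show n + (-1:ℝ) = n - 1 by ring, hGm, rpow_neg_one]
      rw [div_eq_mul_inv]
    · have key := Gamma_mul_add_mul_le_rpow_Gamma_mul_rpow_Gamma (s := n - 1) (t := n)
        hn1 hn0 (a := -x) (b := 1 + x) (by linarith) (by linarith) (by ring)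
      have harg : -x * (n - 1) + (1 + x) * n = n + x := by ring
      rw [harg, hGm, div_rpow hG.le hn1.le, rpow_neg hn1.le] at key
      calc Gamma (n + x) ≤ Gamma n ^ (-x) / ((n - 1) ^ x)⁻¹ * Gamma n ^ (1 + x) := key
        _ = Gamma n * (n - 1) ^ x := by
            rw [div_eq_mul_inv, inv_inv]
            have hgg : Gamma n ^ (-x) * Gamma n ^ (1 + x) = Gamma n := by
              rw [← rpow_add hG]; norm_num
            linear_combination ((n - 1) ^ x) * hgg
  -- Step 2 : (n-1)^x ≤ n^x (1 - x/(n-1))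
  have step2 : (n - 1) ^ x ≤ n ^ x * (1 - x / (n - 1)) := by
    have hb := rpow_one_add_le_one_add_mul_self (s := 1 / (n - 1))
      (le_trans (by norm_num) (by positivity : (0:ℝ) ≤ 1 / (n - 1)))
      (p := -x) (by linarith) (by linarith)
    have e3 : (1 : ℝ) + 1 / (n - 1) = n / (n - 1) := by field_simp; ring
    rw [e3] at hb
    have e4 : (n / (n - 1)) ^ (-x) = (n - 1) ^ x / n ^ x := by
      rw [rpow_neg (by positivity), ← inv_rpow (by positivity), inv_div,
        div_rpow hn1.le hn0.le]
    rw [e4] at hb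
    have hpn : (0:ℝ) < n ^ x := rpow_pos_of_pos hn0 x
    rw [div_le_iff₀ hpn] at hb
    calc (n - 1) ^ x ≤ (1 + -x * (1 / (n - 1))) * n ^ x := hb
      _ = n ^ x * (1 - x / (n - 1)) := by ring
  calc Gamma (n + x) ≤ Gamma n * (n - 1) ^ x := step1
    _ ≤ Gamma n * (n ^ x * (1 - x / (n - 1))) := mul_le_mul_of_nonneg_left step2 hG.le
    _ = n ^ x * Gamma n * (1 - x / (n - 1)) := by ring

end Aux

/-- For every integer `j ≥ 2` and every `x ∈ [-1,1]`, `x ≠ 0`, one has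
`0 ≤ (1/x)(1 - Γ(j+x)/(j^x Γ(j))) ≤ 1/(j-1)`.  In particular
`Γ(j+x) ≤ j^x Γ(j)` for `x ∈ (0,1]` and
`Γ(j+x) ≥ j^x Γ(j) (1 - |x|/(j-1))` for `x ∈ [-1,0)`. -/
theorem stmt1 (j : ℕ) (hj : 2 ≤ j) :
    (∀ x : ℝ, x ∈ Set.Icc (-1 : ℝ) 1 → x ≠ 0 →
      0 ≤ (1 / x) * (1 - Real.Gamma ((j : ℝ) + x) / ((j : ℝ) ^ x * Real.Gamma j)) ∧
      (1 / x) * (1 - Real.Gamma ((j : ℝ) + x) / ((j : ℝ) ^ x * Real.Gamma j)) ≤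
        1 / ((j : ℝ) - 1)) ∧
    (∀ x : ℝ, 0 < x → x ≤ 1 →
      Real.Gamma ((j : ℝ) + x) ≤ (j : ℝ) ^ x * Real.Gamma j) ∧
    (∀ x : ℝ, -1 ≤ x → x < 0 →
      (j : ℝ) ^ x * Real.Gamma j * (1 - |x| / ((j : ℝ) - 1)) ≤
        Real.Gamma ((j : ℝ) + x)) := by
  have hn : (2:ℝ) ≤ (j:ℝ) := by exact_mod_cast hj
  have hn0 : (0:ℝ) < (j:ℝ) := by linarith
  have hn1 : (0:ℝ) < (j:ℝ) - 1 := by linarith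
  have hG : 0 < Gamma (j:ℝ) := Gamma_pos_of_pos hn0
  refine ⟨?_, fun x hx0 hx1 => gammaA hn hx0 hx1, fun x hx0 hx1 => ?_⟩
  · intro x hx hne
    obtain ⟨hxl, hxr⟩ := hx
    have hP : 0 < (j:ℝ) ^ x * Gamma (j:ℝ) := by
      have := rpow_pos_of_pos hn0 x; positivity
    rcases lt_or_gt_of_ne hne with hneg | hpos
    · -- negative x
      have hB := gammaB hn hxl hneg
      have hD := gammaD hn hxl hneg
      have hf1 : 1 ≤ Gamma ((j:ℝ) + x) / ((j:ℝ) ^ x * Gamma (j:ℝ)) := (one_le_div hP).mpr hB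
      have hf2 : Gamma ((j:ℝ) + x) / ((j:ℝ) ^ x * Gamma (j:ℝ)) ≤ 1 - x / ((j:ℝ) - 1) :=
        (div_le_iff₀ hP).mpr (by nlinarith [hD])
      constructor
      · have h1x : 1 / x ≤ 0 := by rw [one_div]; exact inv_nonpos.mpr hneg.le
        nlinarith [h1x, hf1]
      · rw [one_div_mul_eq_div, div_le_iff_of_neg hneg]
        have hx' : x / ((j:ℝ) - 1) = 1 / ((j:ℝ) - 1) * x := by ring
        linarith [hf2]
    · -- positive x
      have hA := gammaA hn hpos hxr
      have hC := gammaC hn hpos hxr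
      have hf2 : Gamma ((j:ℝ) + x) / ((j:ℝ) ^ x * Gamma (j:ℝ)) ≤ 1 := (div_le_one hP).mpr hA
      have hf1 : 1 - x / ((j:ℝ) - 1) ≤ Gamma ((j:ℝ) + x) / ((j:ℝ) ^ x * Gamma (j:ℝ)) :=
        (le_div_iff₀ hP).mpr (by nlinarith [hC])
      constructor
      · exact mul_nonneg (by positivity) (by linarith)
      · rw [one_div_mul_eq_div, div_le_iff₀ hpos]
        have hx' : x / ((j:ℝ) - 1) = 1 / ((j:ℝ) - 1) * x := by ring
        linarith [hf1]
  · -- third part from gammaB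
    have hB := gammaB hn hx0 hx1
    have hP : 0 < (j:ℝ) ^ x * Gamma (j:ℝ) := by
      have := rpow_pos_of_pos hn0 x; positivity
    have habs : 0 ≤ |x| / ((j:ℝ) - 1) := by positivity
    nlinarith [hB, hP, habs]
end

section
/- For every integer j ≥ 2, the function x ↦ Γ(j+x) / (j^x · Γ(j)) is convex on the interval [−1, 1] (equivalently, the function h_j(x) = 1 − Γ(j+x)/(j^x Γ(j)) is concave on [−1, 1]). -/
/-- For every integer `j ≥ 2`, the function `x ↦ Γ(j+x)/(j^x Γ(j))` is convex on `[-1,1]`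
(equivalently `h_j(x) = 1 - Γ(j+x)/(j^x Γ(j))` is concave on `[-1,1]`). -/
theorem stmt2 (j : ℕ) (hj : 2 ≤ j) :
    ConvexOn ℝ (Set.Icc (-1 : ℝ) 1)
      (fun x : ℝ => Real.Gamma ((j : ℝ) + x) / ((j : ℝ) ^ x * Real.Gamma j)) := by
  have hj2 : (2 : ℝ) ≤ (j : ℝ) := by exact_mod_cast hj
  have hjpos : (0 : ℝ) < (j : ℝ) := by linarith
  set L : ℝ := Real.log j with hL
  set C : ℝ := Real.log (Real.Gamma j) with hC
  set g : ℝ → ℝ := fun x => Real.log (Real.Gamma ((j : ℝ) + x)) + (-(x * L) - C) with hgdef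
  have hpos : ∀ x ∈ Set.Icc (-1 : ℝ) 1, (0 : ℝ) < (j : ℝ) + x := by
    rintro x ⟨h1, h2⟩; linarith
  -- convexity of g
  have hg1 : ConvexOn ℝ (Set.Icc (-1 : ℝ) 1)
      (fun x : ℝ => Real.log (Real.Gamma ((j : ℝ) + x))) := by
    have := Real.convexOn_log_Gamma.translate_right ((j : ℝ))
    refine ConvexOn.subset this ?_ (convex_Icc _ _)
    intro x hx
    have := hpos x hx
    simp only [Set.mem_preimage, Set.mem_Ioi]
    linarith
  have hg2 : ConvexOn ℝ (Set.Icc (-1 : ℝ) 1) (fun x : ℝ => -(x * L) - C) := by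
    refine ⟨convex_Icc _ _, fun x _ y _ a b _ _ hab => le_of_eq ?_⟩
    simp only [smul_eq_mul]
    linear_combination C * hab
  have hg : ConvexOn ℝ (Set.Icc (-1 : ℝ) 1) g := hg1.add hg2
  -- continuity of g on the interval
  have hcont : ContinuousOn g (Set.Icc (-1 : ℝ) 1) := by
    intro x hx
    apply ContinuousAt.continuousWithinAt
    have hx0 := hpos x hx
    have hd : DifferentiableAt ℝ Real.Gamma ((j : ℝ) + x) := by
      refine Real.differentiableAt_Gamma fun m => ?_
      have : (0 : ℝ) ≤ (m : ℝ) := m.cast_nonneg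
      intro h; rw [h] at hx0; linarith
    have hadd : ContinuousAt (fun x : ℝ => (j : ℝ) + x) x :=
      (continuous_const.add continuous_id).continuousAt
    have h1 : ContinuousAt (fun x : ℝ => Real.log (Real.Gamma ((j : ℝ) + x))) x :=
      ContinuousAt.log (hd.continuousAt.comp hadd) (Real.Gamma_pos_of_pos hx0).ne'
    exact h1.add ((continuous_id.mul continuous_const).neg.sub continuous_const).continuousAt
  -- image of g is convex
  have himg : Convex ℝ (g '' Set.Icc (-1 : ℝ) 1) := by
    exact (isPreconnected_Icc.image _ hcont).convex
  have hexp : ConvexOn ℝ (Set.Icc (-1 : ℝ) 1) (Real.exp ∘ g) :=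
    (convexOn_exp.subset (Set.subset_univ _) himg).comp hg
      (Real.exp_monotone.monotoneOn _)
  refine hexp.congr fun x hx => ?_
  have hx0 := hpos x hx
  have h1 : Real.Gamma ((j : ℝ) + x) > 0 := Real.Gamma_pos_of_pos hx0
  have h2 : Real.Gamma (j : ℝ) > 0 := Real.Gamma_pos_of_pos hjpos
  have h3 : (0 : ℝ) < (j : ℝ) ^ x := Real.rpow_pos_of_pos hjpos x
  simp only [Function.comp_apply, hgdef]
  rw [Real.exp_add, Real.exp_log h1, Real.exp_sub, Real.exp_neg, hL, hC,
    Real.exp_log h2, ← Real.exp_log h3, Real.log_rpow hjpos]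
  field_simp
end

section
/- For every integer j ≥ 2 and every x ∈ [−1, 1], the function h_j(y) = 1 − Γ(j+y)/(j^y · Γ(j)) satisfies x · h_j′(x) ≤ h_j(x), where h_j′ denotes the derivative of h_j. (This expresses that the difference quotient g_j(x) = h_j(x)/x is nonincreasing on [−1,1].) -/
/-- For every integer `j ≥ 2` and `x ∈ [-1,1]`, the function
`h_j(y) = 1 - Γ(j+y)/(j^y Γ(j))` satisfies `x · h_j'(x) ≤ h_j(x)`, i.e. the difference
quotient `g_j(x) = h_j(x)/x` is nonincreasing on `[-1,1]`. -/
theorem stmt3 (j : ℕ) (hj : 2 ≤ j) (x : ℝ) (hx : x ∈ Set.Icc (-1 : ℝ) 1) :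
    x * deriv (fun y : ℝ => 1 - Real.Gamma ((j : ℝ) + y) / ((j : ℝ) ^ y * Real.Gamma j)) x ≤
      1 - Real.Gamma ((j : ℝ) + x) / ((j : ℝ) ^ x * Real.Gamma j) := by
  have hj0 : (0 : ℝ) < j := by
    have : (2 : ℝ) ≤ j := by exact_mod_cast hj
    linarith
  have hΓj : 0 < Real.Gamma j := Real.Gamma_pos_of_pos hj0
  set F : ℝ → ℝ := fun y => Real.Gamma ((j : ℝ) + y) / ((j : ℝ) ^ y * Real.Gamma j) with hFdef
  set G : ℝ → ℝ := fun y =>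
    Real.log (Real.Gamma ((j : ℝ) + y)) - y * Real.log j - Real.log (Real.Gamma j) with hGdef
  -- positivity of Γ(j+y) for y ∈ Icc (-1) 1
  have hpos : ∀ y : ℝ, y ∈ Set.Icc (-1 : ℝ) 1 → 0 < (j : ℝ) + y := by
    intro y hy
    have : (2 : ℝ) ≤ j := by exact_mod_cast hj
    have := hy.1
    linarith
  -- convexity of G on Icc (-1) 1
  have h1 : ConvexOn ℝ (Set.Icc (-1 : ℝ) 1)
      (fun y => Real.log (Real.Gamma ((j : ℝ) + y))) := by
    refine ⟨convex_Icc _ _, ?_⟩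
    intro p hp q hq a b ha hb hab
    have hp' : (j : ℝ) + p ∈ Set.Ioi (0 : ℝ) := hpos p hp
    have hq' : (j : ℝ) + q ∈ Set.Ioi (0 : ℝ) := hpos q hq
    have key := Real.convexOn_log_Gamma.2 hp' hq' ha hb hab
    simp only [Function.comp_apply, smul_eq_mul] at key ⊢
    have heq : a * ((j : ℝ) + p) + b * ((j : ℝ) + q) = (j : ℝ) + (a * p + b * q) := by
      have : a * (j : ℝ) + b * (j : ℝ) = (j : ℝ) := by
        rw [← add_mul, hab, one_mul]
      ring_nf
      nlinarith [hab]
    rw [heq] at key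
    exact key
  have haff : ConvexOn ℝ (Set.Icc (-1 : ℝ) 1)
      (fun y => -(y * Real.log j) - Real.log (Real.Gamma j)) := by
    refine ⟨convex_Icc _ _, ?_⟩
    intro p _ q _ a b ha hb hab
    simp only [smul_eq_mul]
    apply le_of_eq
    linear_combination (Real.log (Real.Gamma (j : ℝ))) * hab
  have hG : ConvexOn ℝ (Set.Icc (-1 : ℝ) 1) G := by
    have := h1.add haff
    refine this.congr fun y _ => ?_
    simp only [hGdef, Pi.add_apply]
    ring
  -- convexity of F on Icc (-1) 1, as F = exp ∘ G there
  have hFG : ∀ y ∈ Set.Icc (-1 : ℝ) 1, Real.exp (G y) = F y := by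
    intro y hy
    have hΓ : 0 < Real.Gamma ((j : ℝ) + y) := Real.Gamma_pos_of_pos (hpos y hy)
    simp only [hGdef, hFdef]
    rw [Real.exp_sub, Real.exp_sub, Real.exp_log hΓ, Real.exp_log hΓj, div_div]
    congr 2
    rw [Real.rpow_def_of_pos hj0]
    ring_nf
  have hFc : ConvexOn ℝ (Set.Icc (-1 : ℝ) 1) F := by
    have hexpG : ConvexOn ℝ (Set.Icc (-1 : ℝ) 1) (fun y => Real.exp (G y)) := by
      refine ⟨convex_Icc _ _, fun p hp q hq a b ha hb hab => ?_⟩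
      calc Real.exp (G (a • p + b • q)) ≤ Real.exp (a • G p + b • G q) :=
            Real.exp_le_exp.2 (hG.2 hp hq ha hb hab)
        _ ≤ a • Real.exp (G p) + b • Real.exp (G q) :=
            convexOn_exp.2 (Set.mem_univ _) (Set.mem_univ _) ha hb hab
    exact hexpG.congr hFG
  -- differentiability of F at x
  have hΓd : DifferentiableAt ℝ (fun y : ℝ => Real.Gamma ((j : ℝ) + y)) x := by
    have hg : DifferentiableAt ℝ (fun y : ℝ => (j : ℝ) + y) x :=
      (differentiableAt_id.const_add _)
    have hf : DifferentiableAt ℝ Real.Gamma ((j : ℝ) + x) := by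
      refine Real.differentiableAt_Gamma fun m => ?_
      have h1 := hpos x hx
      have h2 : (0 : ℝ) ≤ m := Nat.cast_nonneg m
      intro h
      rw [h] at h1
      linarith
    exact hf.comp x hg
  have hdend : DifferentiableAt ℝ (fun y : ℝ => (j : ℝ) ^ y * Real.Gamma j) x :=
    (HasDerivAt.differentiableAt (HasStrictDerivAt.hasDerivAt (Real.hasStrictDerivAt_const_rpow hj0 x))).mul_const _
  have hdenne : ((j : ℝ) ^ x * Real.Gamma j) ≠ 0 := by
    have : (0 : ℝ) < (j : ℝ) ^ x := Real.rpow_pos_of_pos hj0 x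
    positivity
  have hFd : DifferentiableAt ℝ F x := hΓd.div hdend hdenne
  -- rewrite the deriv of h in terms of deriv F
  have hderiv : deriv (fun y : ℝ =>
      1 - Real.Gamma ((j : ℝ) + y) / ((j : ℝ) ^ y * Real.Gamma j)) x = -deriv F x := by
    have : (fun y : ℝ => 1 - Real.Gamma ((j : ℝ) + y) / ((j : ℝ) ^ y * Real.Gamma j))
        = fun y => 1 - F y := rfl
    rw [this, deriv_const_sub]
  have hF0 : F 0 = 1 := by
    simp only [hFdef]
    rw [Real.rpow_zero, one_mul, add_zero, div_self hΓj.ne']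
  have h0mem : (0 : ℝ) ∈ Set.Icc (-1 : ℝ) 1 := by constructor <;> norm_num
  have hgoal : 1 - F x = 1 - Real.Gamma ((j : ℝ) + x) / ((j : ℝ) ^ x * Real.Gamma j) := rfl
  rw [hderiv, ← hgoal]
  rcases lt_trichotomy x 0 with hx0 | hx0 | hx0
  · have key := ConvexOn.deriv_le_slope hFc (Set.mem_Icc.mpr ⟨hx.1, hx.2⟩) h0mem hx0 hFd
    rw [slope_def_field, hF0] at key
    have hxneg : (0 : ℝ) < -x := by linarith
    have key2 : deriv F x * (0 - x) ≤ 1 - F x :=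
      (le_div_iff₀ (by linarith : (0:ℝ) < 0 - x)).1 key
    nlinarith [key2]
  · subst hx0
    simp [hF0]
  · have key := ConvexOn.slope_le_deriv hFc h0mem (Set.mem_Icc.mpr ⟨hx.1, hx.2⟩) hx0 hFd
    rw [slope_def_field, hF0] at key
    have key2 : F x - 1 ≤ deriv F x * (x - 0) := by
      exact (div_le_iff₀ (by linarith : (0:ℝ) < x - 0)).1 key
    nlinarith [key2]
end

section
/- Let n, a ∈ ℝ with 0 ≤ a < n, let j ≥ 1 be an integer, and let α ∈ ℝ with α > −j. Then ∫₀^∞ (1 − (t n / j)^α) · e^{a t} · (n^j/(j−1)!) · t^{j−1} · e^{−n t} dt = (n/(n−a))^j · (1 − (n/(n−a))^α) + (n/(n−a))^{j+α} · (1 − Γ(j+α)/(j^α · Γ(j))). -/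
open MeasureTheory

lemma aux_integrable {s b : ℝ} (hs : -1 < s) (hb : 0 < b) :
    IntegrableOn (fun t : ℝ => t ^ s * Real.exp (-(b * t))) (Set.Ioi 0) := by
  have := integrableOn_rpow_mul_exp_neg_mul_rpow (p := 1) hs one_pos hb
  refine this.congr_fun (fun x hx => ?_) measurableSet_Ioi
  simp only [Real.rpow_one, neg_mul]

/-- For `0 ≤ a < n` real, `j ≥ 1` integer and `α > -j`:
`∫₀^∞ (1 - (tn/j)^α) e^{at} (n^j/(j-1)!) t^(j-1) e^{-nt} dt
  = (n/(n-a))^j (1 - (n/(n-a))^α) + (n/(n-a))^(j+α) (1 - Γ(j+α)/(j^α Γ(j)))`. -/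
theorem stmt5 (n a : ℝ) (ha : 0 ≤ a) (han : a < n) (j : ℕ) (hj : 1 ≤ j)
    (α : ℝ) (hα : -(j : ℝ) < α) :
    ∫ t in Set.Ioi (0 : ℝ),
        (1 - (t * n / (j : ℝ)) ^ α) * Real.exp (a * t) *
          (n ^ j / (Nat.factorial (j - 1) : ℝ) * t ^ (j - 1) * Real.exp (-n * t)) =
      (n / (n - a)) ^ j * (1 - (n / (n - a)) ^ α) +
        (n / (n - a)) ^ ((j : ℝ) + α) *
          (1 - Real.Gamma ((j : ℝ) + α) / ((j : ℝ) ^ α * Real.Gamma j)) := by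
  have hb : (0:ℝ) < n - a := by linarith
  have hn : (0:ℝ) < n := lt_of_le_of_lt ha han
  have hjR : (0:ℝ) < (j:ℝ) := by exact_mod_cast hj
  set b : ℝ := n - a with hbdef
  set C : ℝ := n ^ j / (Nat.factorial (j - 1) : ℝ) with hC
  -- cast of j-1
  have hjcast : ((j - 1 : ℕ) : ℝ) = (j : ℝ) - 1 := by
    rw [Nat.cast_sub hj, Nat.cast_one]
  -- rewrite integrand
  have hcong : ∀ t ∈ Set.Ioi (0:ℝ),
      (1 - (t * n / (j : ℝ)) ^ α) * Real.exp (a * t) *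
        (C * t ^ (j - 1) * Real.exp (-n * t)) =
      C * (t ^ ((j:ℝ) - 1) * Real.exp (-(b * t))) -
        (C * (n / (j:ℝ)) ^ α) * (t ^ ((j:ℝ) + α - 1) * Real.exp (-(b * t))) := by
    intro t ht
    have ht : 0 < t := ht
    have h1 : (t:ℝ) ^ (j - 1) = t ^ ((j:ℝ) - 1) := by
      rw [← hjcast, Real.rpow_natCast]
    have h2 : (t * n / (j:ℝ)) ^ α = t ^ α * (n / (j:ℝ)) ^ α := by
      rw [mul_div_assoc, Real.mul_rpow ht.le (by positivity)]
    have h3 : Real.exp (a * t) * Real.exp (-n * t) = Real.exp (-(b * t)) := by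
      rw [← Real.exp_add]; congr 1; rw [hbdef]; ring
    have h4 : t ^ ((j:ℝ) + α - 1) = t ^ ((j:ℝ) - 1) * t ^ α := by
      rw [← Real.rpow_add ht]; ring_nf
    rw [h1, h2, h4]
    calc (1 - t ^ α * (n / (j:ℝ)) ^ α) * Real.exp (a * t) *
          (C * t ^ ((j:ℝ) - 1) * Real.exp (-n * t))
        = C * (t ^ ((j:ℝ) - 1) * (Real.exp (a*t) * Real.exp (-n*t))) -
          (C * (n / (j:ℝ)) ^ α) * (t ^ ((j:ℝ) - 1) * t ^ α *
            (Real.exp (a*t) * Real.exp (-n*t))) := by ring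
      _ = _ := by rw [h3]
  rw [setIntegral_congr_fun measurableSet_Ioi hcong]
  have hα1 : (-1:ℝ) < (j:ℝ) - 1 := by linarith
  have hα2 : (-1:ℝ) < (j:ℝ) + α - 1 := by linarith
  have hi1 : IntegrableOn (fun t : ℝ => t ^ ((j:ℝ) - 1) * Real.exp (-(b * t)))
      (Set.Ioi 0) := aux_integrable hα1 hb
  have hi2 : IntegrableOn (fun t : ℝ => t ^ ((j:ℝ) + α - 1) * Real.exp (-(b * t)))
      (Set.Ioi 0) := aux_integrable hα2 hb
  rw [integral_sub (hi1.const_mul C) (hi2.const_mul _), integral_const_mul, integral_const_mul,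
    Real.integral_rpow_mul_exp_neg_mul_Ioi hjR hb,
    show (j:ℝ) + α - 1 = ((j:ℝ) + α) - 1 by ring,
    Real.integral_rpow_mul_exp_neg_mul_Ioi (by linarith : (0:ℝ) < (j:ℝ) + α) hb]
  -- now pure algebra
  have hΓj : Real.Gamma (j:ℝ) = (Nat.factorial (j - 1) : ℝ) := by
    have := Nat.succ_pred_eq_of_pos hj
    rw [show (j:ℝ) = ((j - 1 : ℕ) : ℝ) + 1 by rw [hjcast]; ring,
      Real.Gamma_nat_eq_factorial]
  have hfac : (Nat.factorial (j - 1) : ℝ) ≠ 0 := by positivity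
  have hΓjpos : 0 < Real.Gamma (j:ℝ) := Real.Gamma_pos_of_pos hjR
  -- expand rpows
  rw [Real.rpow_add (by positivity : (0:ℝ) < n / (n - a)),
    Real.rpow_natCast (n / (n-a)) j]
  rw [Real.rpow_add (by positivity : (0:ℝ) < 1 / b),
    Real.rpow_natCast (1 / b) j,
    Real.div_rpow hn.le hjR.le,
    Real.div_rpow (le_of_lt (by positivity)) hb.le,
    Real.div_rpow hn.le (by positivity : (0:ℝ) ≤ n - a)]
  have hbα : (0:ℝ) < b ^ α := Real.rpow_pos_of_pos hb α
  have hnα : (0:ℝ) < n ^ α := Real.rpow_pos_of_pos hn α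
  have hjα : (0:ℝ) < (j:ℝ) ^ α := Real.rpow_pos_of_pos hjR α
  have h1b : (1:ℝ) ^ α = 1 := Real.one_rpow α
  have hCval : C = n ^ j / Real.Gamma (j:ℝ) := by rw [hC, hΓj]
  rw [h1b, hCval, ← hbdef]
  have hbne : b ≠ 0 := hb.ne'
  have hΓne : Real.Gamma (j:ℝ) ≠ 0 := hΓjpos.ne'
  field_simp
  ring
end

section
/- Let a > 0, let α ∈ [−1, 1], and let n ∈ ℝ with n ≥ 2a. Then |1 − (n/(n−a))^α| ≤ 2 |α| · a / n. -/
/-- For `a > 0`, `α ∈ [-1,1]` and `n ≥ 2a`: `|1 - (n/(n-a))^α| ≤ 2|α| a / n`. -/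
theorem stmt6 (a α n : ℝ) (ha : 0 < a) (hα : α ∈ Set.Icc (-1 : ℝ) 1) (hn : 2 * a ≤ n) :
    |1 - (n / (n - a)) ^ α| ≤ 2 * |α| * a / n := by
  obtain ⟨hα1, hα2⟩ := hα
  have hn0 : 0 < n := lt_of_lt_of_le (by linarith) hn
  have hna : 0 < n - a := by linarith
  set x : ℝ := n / (n - a) with hx
  have hx1 : 1 ≤ x := (one_le_div hna).2 (by linarith)
  have hxm1 : x - 1 = a / (n - a) := by
    field_simp [hx]
    rw [hx, sub_mul, div_mul_cancel₀ _ hna.ne']; ring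
  have hxbound : x - 1 ≤ 2 * a / n := by
    rw [hxm1, div_le_div_iff₀ hna hn0]
    nlinarith
  -- Bernoulli: for p ∈ [0,1], x^p ≤ 1 + p*(x-1)
  have bern : ∀ p : ℝ, 0 ≤ p → p ≤ 1 → x ^ p ≤ 1 + p * (x - 1) := by
    intro p hp0 hp1
    have := rpow_one_add_le_one_add_mul_self (s := x - 1) (by linarith) hp0 hp1
    simpa using this
  have key : |1 - x ^ α| ≤ |α| * (x - 1) := by
    rcases le_or_gt 0 α with hα0 | hα0
    · -- α ≥ 0: 1 ≤ x^α ≤ 1 + α(x-1)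
      have h1 : 1 ≤ x ^ α := Real.one_le_rpow hx1 hα0
      have h2 : x ^ α ≤ 1 + α * (x - 1) := bern α hα0 hα2
      rw [abs_of_nonpos (by linarith), abs_of_nonneg hα0]
      linarith
    · -- α < 0: x^α ≤ 1 and 1 - x^α ≤ x^{-α} - 1 ≤ -α(x-1)
      have hx0 : 0 < x := lt_of_lt_of_le one_pos hx1
      have h1 : x ^ α ≤ 1 := Real.rpow_le_one_of_one_le_of_nonpos hx1 hα0.le
      have h3 : 1 ≤ x ^ (-α) := Real.one_le_rpow hx1 (by linarith)
      have h4 : x ^ (-α) ≤ 1 + (-α) * (x - 1) := bern (-α) (by linarith) (by linarith)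
      have hxa : x ^ α = (x ^ (-α))⁻¹ := by
        rw [← Real.rpow_neg hx0.le, neg_neg]
      have hpos : 0 < x ^ (-α) := lt_of_lt_of_le one_pos h3
      have h5 : 1 - x ^ α ≤ x ^ (-α) - 1 := by
        rw [hxa]
        have : (x ^ (-α))⁻¹ ≥ 2 - x ^ (-α) := by
          rw [ge_iff_le, ← sub_nonneg]
          have : (x ^ (-α))⁻¹ - (2 - x ^ (-α)) = (x ^ (-α) - 1) ^ 2 / x ^ (-α) := by
            field_simp; ring
          rw [this]
          positivity
        linarith
      rw [abs_of_nonneg (by linarith), abs_of_neg hα0]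
      linarith
  calc |1 - x ^ α| ≤ |α| * (x - 1) := key
    _ ≤ |α| * (2 * a / n) := by
        exact mul_le_mul_of_nonneg_left hxbound (abs_nonneg α)
    _ = 2 * |α| * a / n := by ring
end

section
/- For every δ ∈ [0, 1] there exists a constant C such that for every integer j ≥ 1 and every real u ≥ 0 one has |(1+u)^{−j} − e^{−j u}| ≤ C · u^δ · j^{δ−1}. (This is the scalar instance, for the scalar semigroup S(t) = e^{−λt} and the implicit Euler approximation (1 + λT/n)^{−j} of S(jT/n), of the uniform boundedness part of the paper's estimate on the difference between the Euler approximants E(t_j^{(n)}) and the analytic semigroup S(t_j^{(n)}).) -/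
private lemma aux_pow_sub (a b : ℝ) (ha : 0 ≤ a) (hb : 0 ≤ b) (hba : b ≤ a) :
    ∀ n : ℕ, a ^ (n + 1) - b ^ (n + 1) ≤ (n + 1) * (a - b) * a ^ n := by
  intro n
  induction n with
  | zero => simp
  | succ m ih =>
    have hpow : b ^ (m + 1) ≤ a ^ (m + 1) := pow_le_pow_left₀ hb hba _
    have han : 0 ≤ a ^ m := pow_nonneg ha m
    have han1 : 0 ≤ a ^ (m + 1) := pow_nonneg ha (m + 1)
    have key : a ^ (m + 1 + 1) - b ^ (m + 1 + 1)
        = a * (a ^ (m + 1) - b ^ (m + 1)) + (a - b) * b ^ (m + 1) := by ring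
    have h1 : a * (a ^ (m + 1) - b ^ (m + 1)) ≤ a * (((m : ℝ) + 1) * (a - b) * a ^ m) :=
      mul_le_mul_of_nonneg_left ih ha
    have h2 : (a - b) * b ^ (m + 1) ≤ (a - b) * a ^ (m + 1) :=
      mul_le_mul_of_nonneg_left hpow (by linarith)
    have e3 : a * (((m : ℝ) + 1) * (a - b) * a ^ m) = ((m : ℝ) + 1) * (a - b) * a ^ (m + 1) := by
      ring
    push_cast
    linarith

private lemma aux_binom (u : ℝ) (hu : 0 ≤ u) :
    ∀ n : ℕ, 1 + n * u + n * (n - 1) / 2 * u ^ 2 ≤ (1 + u) ^ n := by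
  intro n
  induction n with
  | zero => norm_num
  | succ m ih =>
    have hm : (0 : ℝ) ≤ m := Nat.cast_nonneg m
    have hmm : (0 : ℝ) ≤ (m : ℝ) * ((m : ℝ) - 1) := by
      rcases Nat.eq_zero_or_pos m with h | h
      · simp [h]
      · have : (1 : ℝ) ≤ m := by exact_mod_cast h
        nlinarith
    have h1 : (1 + u) * (1 + (m : ℝ) * u + (m : ℝ) * ((m : ℝ) - 1) / 2 * u ^ 2)
        ≤ (1 + u) ^ (m + 1) := by
      calc (1 + u) * (1 + (m : ℝ) * u + (m : ℝ) * ((m : ℝ) - 1) / 2 * u ^ 2)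
          ≤ (1 + u) * (1 + u) ^ m :=
            mul_le_mul_of_nonneg_left ih (by linarith)
        _ = (1 + u) ^ (m + 1) := by ring
    have hcube : (0 : ℝ) ≤ (m : ℝ) * ((m : ℝ) - 1) / 2 * u ^ 3 := by
      have : (0 : ℝ) ≤ u ^ 3 := by positivity
      nlinarith
    have expand : (1 + u) * (1 + (m : ℝ) * u + (m : ℝ) * ((m : ℝ) - 1) / 2 * u ^ 2)
        = 1 + ((m : ℝ) + 1) * u + ((m : ℝ) + 1) * (m : ℝ) / 2 * u ^ 2
          + (m : ℝ) * ((m : ℝ) - 1) / 2 * u ^ 3 := by ring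
    push_cast
    linarith [h1, hcube, expand]

private lemma aux_min_rpow (x : ℝ) (hx : 0 ≤ x) (δ : ℝ) (h0 : 0 ≤ δ) (h1 : δ ≤ 1) :
    min 1 x ≤ x ^ δ := by
  rcases eq_or_lt_of_le hx with h | h
  · rw [← h]
    have : min (1 : ℝ) 0 = 0 := by norm_num
    rw [this]
    exact Real.rpow_nonneg le_rfl δ
  · rcases le_total x 1 with hx1 | hx1
    · have : x ^ (1 : ℝ) ≤ x ^ δ := Real.rpow_le_rpow_of_exponent_ge h hx1 h1
      rw [Real.rpow_one] at this
      exact le_trans (min_le_right _ _) this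
    · have : (1 : ℝ) ≤ x ^ δ := Real.one_le_rpow hx1 h0
      exact le_trans (min_le_left _ _) this

/-- Scalar instance of the uniform Euler-vs-semigroup estimate: for every `δ ∈ [0,1]`
there is a constant `C` such that for every integer `j ≥ 1` and real `u ≥ 0`,
`|(1+u)^(-j) - e^(-ju)| ≤ C u^δ j^(δ-1)`. -/
theorem stmt7 (δ : ℝ) (hδ : δ ∈ Set.Icc (0 : ℝ) 1) :
    ∃ C : ℝ, ∀ j : ℕ, 1 ≤ j → ∀ u : ℝ, 0 ≤ u →
      |(1 + u) ^ (-(j : ℝ)) - Real.exp (-((j : ℝ) * u))| ≤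
        C * u ^ δ * (j : ℝ) ^ (δ - 1) := by
  obtain ⟨hδ0, hδ1⟩ := hδ
  refine ⟨4, fun j hj u hu => ?_⟩
  have hx : (0 : ℝ) < 1 + u := by linarith
  obtain ⟨m, rfl⟩ : ∃ m, j = m + 1 := ⟨j - 1, (Nat.succ_pred_eq_of_pos hj).symm⟩
  set a : ℝ := (1 + u)⁻¹ with ha_def
  set b : ℝ := Real.exp (-u) with hb_def
  have ha0 : 0 ≤ a := by rw [ha_def]; positivity
  have hb0 : 0 ≤ b := (Real.exp_pos _).le
  have hba : b ≤ a := by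
    rw [hb_def, Real.exp_neg, ha_def]
    apply inv_anti₀ hx
    linarith [Real.add_one_le_exp u]
  have ha1 : a ≤ 1 := by
    rw [ha_def]
    exact inv_le_one_of_one_le₀ (by linarith)
  have hab : a - b ≤ u ^ 2 * a := by
    have h1 : 1 - u ≤ b := by
      have := Real.add_one_le_exp (-u)
      rw [← hb_def] at this
      linarith
    have h2 : 1 - (1 + u) * b ≤ u ^ 2 := by nlinarith
    have hinv : (1 + u) * a = 1 := by
      rw [ha_def]; field_simp
    nlinarith [mul_le_mul_of_nonneg_right h2 ha0]
  have hxa : (1 + u) * a = 1 := by rw [ha_def]; field_simp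
  have hL : (1 + u) ^ (-((m + 1 : ℕ) : ℝ)) = a ^ (m + 1) := by
    rw [Real.rpow_neg hx.le, Real.rpow_natCast, ha_def, inv_pow]
  have hR : Real.exp (-(((m + 1 : ℕ) : ℝ) * u)) = b ^ (m + 1) := by
    rw [hb_def, ← Real.exp_nat_mul]
    ring_nf
  rw [hL, hR]
  clear_value a b
  clear ha_def hb_def hL hR
  have hpowle : b ^ (m + 1) ≤ a ^ (m + 1) := pow_le_pow_left₀ hb0 hba _
  rw [abs_of_nonneg (by linarith)]
  have hpa : 0 ≤ a ^ (m + 1) := pow_nonneg ha0 _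
  have hpa' : 0 ≤ a ^ m := pow_nonneg ha0 _
  have hxapow : (1 + u) ^ (m + 1) * a ^ (m + 1) = 1 := by
    rw [← mul_pow, hxa, one_pow]
  -- D ≤ (m+1) u^2 a^(m+1)
  have hDle : a ^ (m + 1) - b ^ (m + 1) ≤ ((m : ℝ) + 1) * u ^ 2 * a ^ (m + 1) := by
    have h1 := aux_pow_sub a b ha0 hb0 hba m
    have h2 : ((m : ℝ) + 1) * (a - b) * a ^ m ≤ ((m : ℝ) + 1) * (u ^ 2 * a) * a ^ m :=
      mul_le_mul_of_nonneg_right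
        (mul_le_mul_of_nonneg_left hab (by positivity)) hpa'
    have h3 : ((m : ℝ) + 1) * (u ^ 2 * a) * a ^ m = ((m : ℝ) + 1) * u ^ 2 * a ^ (m + 1) := by
      rw [pow_succ]; ring
    linarith [h1.trans (h2.trans_eq h3)]
  have hJ1 : (1 : ℝ) ≤ (m : ℝ) + 1 := by
    linarith [(Nat.cast_nonneg m : (0 : ℝ) ≤ (m : ℝ))]
  have hJ0 : (0 : ℝ) < (m : ℝ) + 1 := by linarith
  have hgrow : ((m : ℝ) + 1) * u ≤ (1 + u) ^ (m + 1) := by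
    have := one_add_mul_le_pow (by linarith : (-2 : ℝ) ≤ u) (m + 1)
    push_cast at this
    nlinarith
  -- Bound B : D ≤ u
  have hBu : a ^ (m + 1) - b ^ (m + 1) ≤ u := by
    have h1 : ((m : ℝ) + 1) * u * a ^ (m + 1) ≤ 1 := by
      calc ((m : ℝ) + 1) * u * a ^ (m + 1) ≤ (1 + u) ^ (m + 1) * a ^ (m + 1) :=
            mul_le_mul_of_nonneg_right hgrow hpa
        _ = 1 := hxapow
    calc a ^ (m + 1) - b ^ (m + 1) ≤ ((m : ℝ) + 1) * u ^ 2 * a ^ (m + 1) := hDle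
      _ = u * (((m : ℝ) + 1) * u * a ^ (m + 1)) := by ring
      _ ≤ u * 1 := mul_le_mul_of_nonneg_left h1 hu
      _ = u := mul_one u
  -- Bound A : (m+1) * D ≤ 4
  have hA : ((m : ℝ) + 1) * (a ^ (m + 1) - b ^ (m + 1)) ≤ 4 := by
    rcases Nat.eq_zero_or_pos m with hm0 | hm0
    · subst hm0
      have h1 : a ^ (0 + 1) ≤ 1 := by simpa using ha1
      have h2 : 0 ≤ b ^ (0 + 1) := pow_nonneg hb0 _
      norm_num
      linarith
    · have hm1 : (1 : ℝ) ≤ m := by exact_mod_cast hm0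
      have hbin := aux_binom u hu (m + 1)
      push_cast at hbin
      have hq : ((m : ℝ) + 1) ^ 2 * u ^ 2 / 4 ≤ (1 + u) ^ (m + 1) := by
        nlinarith [sq_nonneg u, mul_nonneg (mul_nonneg hu hu) (sub_nonneg.mpr hm1)]
      have hfin : ((m : ℝ) + 1) ^ 2 * u ^ 2 * a ^ (m + 1) ≤ 4 := by
        have h1 : ((m : ℝ) + 1) ^ 2 * u ^ 2 / 4 * a ^ (m + 1)
            ≤ (1 + u) ^ (m + 1) * a ^ (m + 1) :=
          mul_le_mul_of_nonneg_right hq hpa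
        rw [hxapow] at h1
        linarith
      have hJDle : ((m : ℝ) + 1) * (a ^ (m + 1) - b ^ (m + 1))
          ≤ ((m : ℝ) + 1) ^ 2 * u ^ 2 * a ^ (m + 1) := by
        calc ((m : ℝ) + 1) * (a ^ (m + 1) - b ^ (m + 1))
            ≤ ((m : ℝ) + 1) * (((m : ℝ) + 1) * u ^ 2 * a ^ (m + 1)) :=
              mul_le_mul_of_nonneg_left hDle hJ0.le
          _ = ((m : ℝ) + 1) ^ 2 * u ^ 2 * a ^ (m + 1) := by ring
      linarith
  -- Combine : (m+1) * D ≤ 4 * min 1 ((m+1)*u)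
  have hmin : ((m : ℝ) + 1) * (a ^ (m + 1) - b ^ (m + 1)) ≤ 4 * min 1 (((m : ℝ) + 1) * u) := by
    rcases le_total (((m : ℝ) + 1) * u) 1 with h | h
    · rw [min_eq_right h]
      have := mul_le_mul_of_nonneg_left hBu hJ0.le
      have h0 : 0 ≤ ((m : ℝ) + 1) * u := by positivity
      linarith
    · rw [min_eq_left h]
      linarith
  have hmr : min 1 (((m : ℝ) + 1) * u) ≤ (((m : ℝ) + 1) * u) ^ δ :=
    aux_min_rpow _ (by positivity) δ hδ0 hδ1
  have hrpow : (((m : ℝ) + 1) * u) ^ δ = ((m : ℝ) + 1) ^ δ * u ^ δ :=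
    Real.mul_rpow hJ0.le hu
  have hJD : ((m : ℝ) + 1) * (a ^ (m + 1) - b ^ (m + 1))
      ≤ 4 * (((m : ℝ) + 1) ^ δ * u ^ δ) := by
    rw [← hrpow]; linarith
  have hc : (((m + 1 : ℕ)) : ℝ) = (m : ℝ) + 1 := by push_cast; ring
  rw [hc, Real.rpow_sub hJ0, Real.rpow_one]
  have he : 4 * u ^ δ * (((m : ℝ) + 1) ^ δ / ((m : ℝ) + 1))
      = 4 * (((m : ℝ) + 1) ^ δ * u ^ δ) / ((m : ℝ) + 1) := by ring
  rw [he, le_div_iff₀ hJ0]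
  linarith
end

section
/- For all δ, θ ∈ [0, 1/2) there exists a constant C, depending only on δ and θ, such that for all T > 0, all positive integers n, and all reals 0 ≤ u ≤ t one has ∫_{⌊u⌋}^{t} (t−s)^{−2θ} · (⌈s⌉ − ⌊u⌋)^{−2δ} ds ≤ C · (t + T/n − u)^{1 − 2δ − 2θ}. -/
open MeasureTheory

lemma stmt10_aux {γ1 γ2 c w x y : ℝ} (hγ1 : 0 ≤ γ1) (hγ1' : γ1 < 1/2)
    (hγ2 : 0 ≤ γ2) (hγ2' : γ2 < 1/2)
    (hw : 0 < w) (hx : 0 < x) (hc1 : 1 ≤ c) (hc4 : c ≤ 4) (hwcx : w ≤ c * x)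
    (hy : 0 ≤ y) (hyw : y ≤ w) :
    x ^ (-(2*γ1)) * (y ^ (-(2*γ2)+1) / (-(2*γ2)+1)) ≤ 16/(1-2*γ2) * w ^ (1-2*γ1-2*γ2) := by
  have hc0 : (0:ℝ) < c := lt_of_lt_of_le one_pos hc1
  have h2 : (0:ℝ) < -(2*γ2)+1 := by linarith
  have hxw : w / c ≤ x := (div_le_iff₀ hc0).mpr (by nlinarith)
  have hwnn : 0 ≤ w ^ (-(2*γ1)) := Real.rpow_nonneg hw.le _
  have hwnn2 : 0 ≤ w ^ (-(2*γ2)+1) := Real.rpow_nonneg hw.le _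
  have A : x ^ (-(2*γ1)) ≤ c ^ (2*γ1) * w ^ (-(2*γ1)) := by
    calc x ^ (-(2*γ1)) ≤ (w/c) ^ (-(2*γ1)) :=
          Real.rpow_le_rpow_of_nonpos (div_pos hw hc0) hxw (by linarith)
    _ = c ^ (2*γ1) * w ^ (-(2*γ1)) := by
        rw [Real.div_rpow hw.le hc0.le, Real.rpow_neg hc0.le, div_eq_mul_inv, inv_inv, mul_comm]
  have B : y ^ (-(2*γ2)+1) ≤ w ^ (-(2*γ2)+1) := Real.rpow_le_rpow hy hyw (by linarith)
  have hc16 : c ^ (2*γ1) ≤ 16 := by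
    calc c ^ (2*γ1) ≤ c ^ (2:ℝ) := Real.rpow_le_rpow_of_exponent_le hc1 (by linarith)
    _ ≤ 4 ^ (2:ℝ) := Real.rpow_le_rpow hc0.le hc4 (by norm_num)
    _ = 16 := by
        rw [show (2:ℝ) = ((2:ℕ):ℝ) by norm_num, Real.rpow_natCast]; norm_num
  have E : w ^ (-(2*γ1)) * w ^ (-(2*γ2)+1) = w ^ (1-2*γ1-2*γ2) := by
    rw [← Real.rpow_add hw]; congr 1; ring
  calc x ^ (-(2*γ1)) * (y ^ (-(2*γ2)+1) / (-(2*γ2)+1))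
      ≤ (c ^ (2*γ1) * w ^ (-(2*γ1))) * (w ^ (-(2*γ2)+1) / (-(2*γ2)+1)) :=
        mul_le_mul A (by gcongr) (div_nonneg (Real.rpow_nonneg hy _) h2.le)
          (mul_nonneg (Real.rpow_nonneg hc0.le _) hwnn)
    _ ≤ (16 * w ^ (-(2*γ1))) * (w ^ (-(2*γ2)+1) / (-(2*γ2)+1)) :=
        mul_le_mul_of_nonneg_right (mul_le_mul_of_nonneg_right hc16 hwnn)
          (div_nonneg hwnn2 h2.le)
    _ = 16/(1-2*γ2) * (w ^ (-(2*γ1)) * w ^ (-(2*γ2)+1)) := by ring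
    _ = 16/(1-2*γ2) * w ^ (1-2*γ1-2*γ2) := by rw [E]

/-- Lemma A.5 of the paper: for `δ, θ ∈ [0,1/2)` there is a constant `C = C(δ,θ)` such
that for all `T > 0`, positive integers `n`, and `0 ≤ u ≤ t`,
`∫_{⌊u⌋}^t (t-s)^(-2θ) (⌈s⌉ - ⌊u⌋)^(-2δ) ds ≤ C (t + T/n - u)^(1-2δ-2θ)`,
where `⌊x⌋ = (T/n)⌊xn/T⌋` is the largest grid point `≤ x` and `⌈x⌉ = ⌊x⌋ + T/n`. -/
theorem stmt10 (δ θ : ℝ) (hδ : δ ∈ Set.Ico (0 : ℝ) (1/2)) (hθ : θ ∈ Set.Ico (0 : ℝ) (1/2)) :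
    ∃ C : ℝ, ∀ T : ℝ, 0 < T → ∀ n : ℕ, 0 < n → ∀ u t : ℝ, 0 ≤ u → u ≤ t →
      (∫ s in (T / n * (⌊u * n / T⌋ : ℤ) : ℝ)..t,
          (t - s) ^ (-(2 * θ)) *
            ((T / n * (⌊s * n / T⌋ : ℤ) + T / n) - T / n * (⌊u * n / T⌋ : ℤ)) ^ (-(2 * δ))) ≤
        C * (t + T / n - u) ^ (1 - 2 * δ - 2 * θ) := by
  obtain ⟨hδ0, hδ1⟩ := hδ
  obtain ⟨hθ0, hθ1⟩ := hθ
  have hδ' : (-1 : ℝ) < -(2*δ) := by linarith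
  have hθ' : (-1 : ℝ) < -(2*θ) := by linarith
  have hC0 : (0:ℝ) < 16/(1-2*δ) + 16/(1-2*θ) :=
    add_pos (div_pos (by norm_num) (by linarith)) (div_pos (by norm_num) (by linarith))
  refine ⟨16/(1-2*δ) + 16/(1-2*θ), ?_⟩
  intro T hT n hn u t hu hut
  have hn0 : (0:ℝ) < n := Nat.cast_pos.mpr hn
  set h : ℝ := T / n with hhdef
  have hh0 : 0 < h := div_pos hT hn0
  set a : ℝ := h * (⌊u * n / T⌋ : ℤ) with hadef
  have key : ∀ x : ℝ, h * (x * n / T) = x := by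
    intro x; field_simp [hhdef]; rw [hhdef, div_mul_eq_mul_div, div_mul_cancel₀ _ hn0.ne']; ring
  have hau : a ≤ u := by
    calc a ≤ h * (u * n / T) := mul_le_mul_of_nonneg_left (Int.floor_le _) hh0.le
    _ = u := key u
  have hua : u < a + h := by
    have h1 : u * n / T < (⌊u * n / T⌋ : ℤ) + 1 := Int.lt_floor_add_one _
    calc u = h * (u * n / T) := (key u).symm
    _ < h * ((⌊u * n / T⌋ : ℤ) + 1) := mul_lt_mul_of_pos_left h1 hh0
    _ = a + h := by rw [hadef]; ring
  have hat : a ≤ t := hau.trans hut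
  set w : ℝ := t + h - u with hwdef
  have hw0 : 0 < w := by rw [hwdef]; linarith
  have hLw : t - a ≤ w := by rw [hwdef]; linarith
  have hwLh : w ≤ (t - a) + h := by rw [hwdef]; linarith
  -- grid facts
  have floorfact : ∀ s : ℝ, a < s →
      h ≤ (h * (⌊s * n / T⌋ : ℤ) + h) - a ∧ s - a ≤ (h * (⌊s * n / T⌋ : ℤ) + h) - a := by
    intro s hs
    have h1 : (⌊u * n / T⌋ : ℝ) < s * n / T := by
      have : h * (⌊u * n / T⌋ : ℤ) < h * (s * n / T) := by rw [key s]; exact hs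
      exact lt_of_mul_lt_mul_left this hh0.le
    have h2 : (⌊u * n / T⌋ : ℤ) ≤ ⌊s * n / T⌋ := Int.le_floor.mpr h1.le
    have h3 : (⌊u * n / T⌋ : ℝ) ≤ (⌊s * n / T⌋ : ℝ) := by exact_mod_cast h2
    have h4 : a ≤ h * (⌊s * n / T⌋ : ℤ) := by
      rw [hadef]; exact mul_le_mul_of_nonneg_left h3 hh0.le
    have h5 : s * n / T < (⌊s * n / T⌋ : ℤ) + 1 := Int.lt_floor_add_one _
    have h6 : s < h * (⌊s * n / T⌋ : ℤ) + h := by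
      calc s = h * (s * n / T) := (key s).symm
      _ < h * ((⌊s * n / T⌋ : ℤ) + 1) := mul_lt_mul_of_pos_left h5 hh0
      _ = h * (⌊s * n / T⌋ : ℤ) + h := by ring
    exact ⟨by linarith, by linarith⟩
  set f : ℝ → ℝ := fun s =>
    (t - s) ^ (-(2 * θ)) *
      ((h * (⌊s * n / T⌋ : ℤ) + h) - a) ^ (-(2 * δ)) with hfdef
  have fnonneg : ∀ s ∈ Set.Ioc a t, 0 ≤ f s := by
    intro s hs
    obtain ⟨h1, _⟩ := floorfact s hs.1
    exact mul_nonneg (Real.rpow_nonneg (by linarith [hs.2]) _)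
      (Real.rpow_nonneg (by linarith) _)
  show (∫ s in a..t, f s) ≤ (16/(1-2*δ) + 16/(1-2*θ)) * w ^ (1 - 2*δ - 2*θ)
  rcases le_total (t - a) h with hcase | hcase
  · -- short interval : t - a ≤ h
    set g : ℝ → ℝ := fun s => h ^ (-(2*δ)) * (t - s) ^ (-(2*θ)) with hgdef
    have hint : IntegrableOn g (Set.Ioc a t) := by
      rw [← intervalIntegrable_iff_integrableOn_Ioc_of_le hat]
      have H := ((intervalIntegral.intervalIntegrable_rpow' (a := t - t) (b := t - a)
        hθ').comp_sub_left t).const_mul (h ^ (-(2*δ)))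
      have H2 : IntervalIntegrable g volume t a := by simpa [hgdef] using H
      exact H2.symm
    have step1 : (∫ s in a..t, f s) ≤ ∫ s in Set.Ioc a t, g s := by
      rw [intervalIntegral.integral_of_le hat]
      refine integral_mono_of_nonneg ?_ hint ?_
      · filter_upwards [ae_restrict_mem measurableSet_Ioc] with s hs
        exact fnonneg s hs
      · filter_upwards [ae_restrict_mem measurableSet_Ioc] with s hs
        obtain ⟨h1, _⟩ := floorfact s hs.1
        calc f s ≤ (t - s) ^ (-(2*θ)) * h ^ (-(2*δ)) :=
              mul_le_mul_of_nonneg_left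
                (Real.rpow_le_rpow_of_nonpos hh0 h1 (by linarith))
                (Real.rpow_nonneg (by linarith [hs.2]) _)
        _ = g s := mul_comm _ _
    have hval : (∫ s in Set.Ioc a t, g s) =
        h ^ (-(2*δ)) * ((t - a) ^ (-(2*θ)+1) / (-(2*θ)+1)) := by
      rw [← intervalIntegral.integral_of_le hat, hgdef]
      rw [intervalIntegral.integral_const_mul]
      congr 1
      rw [intervalIntegral.integral_comp_sub_left (fun x => x ^ (-(2*θ))) t]
      rw [integral_rpow (Or.inl hθ')]
      rw [sub_self, Real.zero_rpow (ne_of_gt (by linarith))]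
      ring
    have hbound := stmt10_aux hδ0 hδ1 hθ0 hθ1 hw0 hh0 (by norm_num) (by norm_num)
      (by linarith : w ≤ 2 * h) (by linarith : (0:ℝ) ≤ t - a) hLw
    calc (∫ s in a..t, f s) ≤ ∫ s in Set.Ioc a t, g s := step1
    _ = h ^ (-(2*δ)) * ((t - a) ^ (-(2*θ)+1) / (-(2*θ)+1)) := hval
    _ ≤ 16/(1-2*θ) * w ^ (1-2*δ-2*θ) := hbound
    _ ≤ (16/(1-2*δ) + 16/(1-2*θ)) * w ^ (1-2*δ-2*θ) := by
        apply mul_le_mul_of_nonneg_right _ (Real.rpow_nonneg hw0.le _)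
        have : (0:ℝ) < 16/(1-2*δ) := div_pos (by norm_num) (by linarith)
        linarith
  · -- long interval : h ≤ t - a
    have hat' : a < t := by linarith
    set p : ℝ := (t - a) / 2 with hpdef
    have hp0 : 0 < p := by rw [hpdef]; linarith
    set m : ℝ := a + p with hmdef
    have ham : a ≤ m := by rw [hmdef]; linarith
    have hmt : m ≤ t := by rw [hmdef, hpdef]; linarith
    have htm : t - m = p := by rw [hmdef, hpdef]; ring
    set g : ℝ → ℝ := fun s => (t - s) ^ (-(2 * θ)) * (s - a) ^ (-(2 * δ)) with hgdef
    have hint1 : IntegrableOn (fun s : ℝ => p ^ (-(2*θ)) * (s - a) ^ (-(2*δ)))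
        (Set.Ioc a m) := by
      rw [← intervalIntegrable_iff_integrableOn_Ioc_of_le ham]
      have := ((intervalIntegral.intervalIntegrable_rpow' (a := a - a) (b := m - a)
        hδ').comp_sub_right a).const_mul (p ^ (-(2*θ)))
      simpa using this
    have hint2 : IntegrableOn (fun s : ℝ => p ^ (-(2*δ)) * (t - s) ^ (-(2*θ)))
        (Set.Ioc m t) := by
      rw [← intervalIntegrable_iff_integrableOn_Ioc_of_le hmt]
      have H := ((intervalIntegral.intervalIntegrable_rpow' (a := t - t) (b := t - m)
        hθ').comp_sub_left t).const_mul (p ^ (-(2*δ)))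
      have H2 : IntervalIntegrable (fun s : ℝ => p ^ (-(2*δ)) * (t - s) ^ (-(2*θ)))
          volume t m := by simpa using H
      exact H2.symm
    have hgcont1 : ContinuousOn g (Set.Ioc a m) := by
      apply ContinuousOn.mul
      · apply ContinuousOn.rpow_const ((continuous_const.sub continuous_id).continuousOn)
        intro s hs
        refine Or.inl (ne_of_gt ?_)
        have h1 : s ≤ m := hs.2
        have h2 : m = a + p := hmdef
        show (0:ℝ) < t - s
        linarith [htm]
      · apply ContinuousOn.rpow_const ((continuous_id.sub continuous_const).continuousOn)
        intro s hs
        refine Or.inl (ne_of_gt ?_)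
        show (0:ℝ) < s - a
        linarith [hs.1]
    have hgcont2 : ContinuousOn g (Set.Ioo m t) := by
      apply ContinuousOn.mul
      · apply ContinuousOn.rpow_const ((continuous_const.sub continuous_id).continuousOn)
        intro s hs
        refine Or.inl (ne_of_gt ?_)
        show (0:ℝ) < t - s
        linarith [hs.2]
      · apply ContinuousOn.rpow_const ((continuous_id.sub continuous_const).continuousOn)
        intro s hs
        refine Or.inl (ne_of_gt ?_)
        have h2 : m = a + p := hmdef
        show (0:ℝ) < s - a
        linarith [hs.1]
    have hig1 : IntegrableOn g (Set.Ioc a m) := by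
      refine hint1.mono' (hgcont1.aestronglyMeasurable measurableSet_Ioc) ?_
      filter_upwards [ae_restrict_mem measurableSet_Ioc] with s hs
      have hsa : 0 < s - a := by linarith [hs.1]
      have hts : p ≤ t - s := by have := hs.2; rw [hmdef] at this; linarith
      rw [Real.norm_of_nonneg (mul_nonneg (Real.rpow_nonneg (by linarith) _)
        (Real.rpow_nonneg hsa.le _))]
      exact mul_le_mul_of_nonneg_right
        (Real.rpow_le_rpow_of_nonpos hp0 hts (by linarith)) (Real.rpow_nonneg hsa.le _)
    have hig2 : IntegrableOn g (Set.Ioc m t) := by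
      have meas : AEStronglyMeasurable g (volume.restrict (Set.Ioc m t)) := by
        rw [← MeasureTheory.restrict_Ioo_eq_restrict_Ioc]
        exact hgcont2.aestronglyMeasurable measurableSet_Ioo
      refine hint2.mono' meas ?_
      filter_upwards [ae_restrict_mem measurableSet_Ioc] with s hs
      have hsa : p ≤ s - a := by have := hs.1; rw [hmdef] at this; linarith
      have hts : 0 ≤ t - s := by linarith [hs.2]
      rw [Real.norm_of_nonneg (mul_nonneg (Real.rpow_nonneg hts _)
        (Real.rpow_nonneg (by linarith) _))]
      rw [mul_comm]
      exact mul_le_mul_of_nonneg_right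
        (Real.rpow_le_rpow_of_nonpos hp0 hsa (by linarith)) (Real.rpow_nonneg hts _)
    have hig : IntegrableOn g (Set.Ioc a t) := by
      rw [← Set.Ioc_union_Ioc_eq_Ioc ham hmt]
      exact hig1.union hig2
    have step1 : (∫ s in a..t, f s) ≤ ∫ s in Set.Ioc a t, g s := by
      rw [intervalIntegral.integral_of_le hat]
      refine integral_mono_of_nonneg ?_ hig ?_
      · filter_upwards [ae_restrict_mem measurableSet_Ioc] with s hs
        exact fnonneg s hs
      · filter_upwards [ae_restrict_mem measurableSet_Ioc] with s hs
        have hsa : 0 < s - a := by linarith [hs.1]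
        exact mul_le_mul_of_nonneg_left
          (Real.rpow_le_rpow_of_nonpos hsa (floorfact s hs.1).2 (by linarith))
          (Real.rpow_nonneg (by linarith [hs.2]) _)
    have step2 : (∫ s in Set.Ioc a t, g s) =
        (∫ s in Set.Ioc a m, g s) + ∫ s in Set.Ioc m t, g s := by
      rw [← Set.Ioc_union_Ioc_eq_Ioc ham hmt,
        setIntegral_union (Set.Ioc_disjoint_Ioc_of_le le_rfl) measurableSet_Ioc hig1 hig2]
    have val1 : (∫ s in Set.Ioc a m, (p ^ (-(2*θ)) * (s - a) ^ (-(2*δ)) : ℝ)) =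
        p ^ (-(2*θ)) * (p ^ (-(2*δ) + 1) / (-(2*δ) + 1)) := by
      rw [← intervalIntegral.integral_of_le ham, intervalIntegral.integral_const_mul]
      congr 1
      rw [intervalIntegral.integral_comp_sub_right (fun x => x ^ (-(2*δ))) a]
      rw [integral_rpow (Or.inl hδ')]
      rw [sub_self, Real.zero_rpow (ne_of_gt (by linarith))]
      rw [show m - a = p by rw [hmdef]; ring]
      ring
    have val2 : (∫ s in Set.Ioc m t, (p ^ (-(2*δ)) * (t - s) ^ (-(2*θ)) : ℝ)) =
        p ^ (-(2*δ)) * (p ^ (-(2*θ) + 1) / (-(2*θ) + 1)) := by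
      rw [← intervalIntegral.integral_of_le hmt, intervalIntegral.integral_const_mul]
      congr 1
      rw [intervalIntegral.integral_comp_sub_left (fun x => x ^ (-(2*θ))) t]
      rw [integral_rpow (Or.inl hθ')]
      rw [sub_self, Real.zero_rpow (ne_of_gt (by linarith)), htm]
      ring
    have step3 : (∫ s in Set.Ioc a m, g s)
        ≤ p ^ (-(2*θ)) * (p ^ (-(2*δ) + 1) / (-(2*δ) + 1)) := by
      rw [← val1]
      refine setIntegral_mono_on hig1 hint1 measurableSet_Ioc ?_
      intro s hs
      have hsa : 0 < s - a := by linarith [hs.1]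
      have hts : p ≤ t - s := by have := hs.2; rw [hmdef] at this; linarith
      exact mul_le_mul_of_nonneg_right
        (Real.rpow_le_rpow_of_nonpos hp0 hts (by linarith)) (Real.rpow_nonneg hsa.le _)
    have step4 : (∫ s in Set.Ioc m t, g s)
        ≤ p ^ (-(2*δ)) * (p ^ (-(2*θ) + 1) / (-(2*θ) + 1)) := by
      rw [← val2]
      refine setIntegral_mono_on hig2 hint2 measurableSet_Ioc ?_
      intro s hs
      have hsa : p ≤ s - a := by have := hs.1; rw [hmdef] at this; linarith
      have hts : 0 ≤ t - s := by linarith [hs.2]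
      rw [hgdef]
      dsimp only
      rw [mul_comm]
      exact mul_le_mul_of_nonneg_right
        (Real.rpow_le_rpow_of_nonpos hp0 hsa (by linarith)) (Real.rpow_nonneg hts _)
    have hw4p : w ≤ 4 * p := by rw [hpdef]; linarith
    have hpw : p ≤ w := by rw [hpdef] at *; linarith
    have hb1 := stmt10_aux hθ0 hθ1 hδ0 hδ1 hw0 hp0 (by norm_num) (le_refl (4:ℝ))
      hw4p hp0.le hpw
    have hb2 := stmt10_aux hδ0 hδ1 hθ0 hθ1 hw0 hp0 (by norm_num) (le_refl (4:ℝ))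
      hw4p hp0.le hpw
    have hexp : (1-2*θ-2*δ : ℝ) = 1-2*δ-2*θ := by ring
    rw [hexp] at hb1
    calc (∫ s in a..t, f s) ≤ ∫ s in Set.Ioc a t, g s := step1
    _ = (∫ s in Set.Ioc a m, g s) + ∫ s in Set.Ioc m t, g s := step2
    _ ≤ p ^ (-(2*θ)) * (p ^ (-(2*δ) + 1) / (-(2*δ) + 1))
        + p ^ (-(2*δ)) * (p ^ (-(2*θ) + 1) / (-(2*θ) + 1)) := add_le_add step3 step4
    _ ≤ 16/(1-2*δ) * w ^ (1-2*δ-2*θ) + 16/(1-2*θ) * w ^ (1-2*δ-2*θ) := add_le_add hb1 hb2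
    _ = (16/(1-2*δ) + 16/(1-2*θ)) * w ^ (1-2*δ-2*θ) := by ring
end

section
/- Let τ ∈ [1, ∞) and α ≥ 0 satisfy ατ < 1, and let 0 < h ≤ t. Then ∫_{−h}^{t−h} | (t−s−h)^{−α} − (t−s)^{−α} · 1_{[0, t−h]}(s) |^τ ds ≤ h^{1−ατ} / (1 − ατ). (This is the key translation estimate, in L^τ, for the weighted kernel s ↦ (t−s)^{−α} used in the Besov-norm bound of Lemma A.3.) -/
open MeasureTheory intervalIntegral

private lemma aux_add_rpow {x y p : ℝ} (hx : 0 ≤ x) (hy : 0 ≤ y) (hp : 1 ≤ p) :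
    x ^ p + y ^ p ≤ (x + y) ^ p := by
  lift x to NNReal using hx
  lift y to NNReal using hy
  exact_mod_cast NNReal.add_rpow_le_rpow_add x y hp

/-- The key `L^τ` translation estimate for the weighted kernel `s ↦ (t-s)^(-α)`
(Lemma A.3 of the paper): for `τ ∈ [1,∞)`, `α ≥ 0` with `ατ < 1`, and `0 < h ≤ t`,
`∫_{-h}^{t-h} |(t-s-h)^(-α) - (t-s)^(-α) 1_{[0,t-h]}(s)|^τ ds ≤ h^(1-ατ)/(1-ατ)`. -/
theorem stmt14 (τ α : ℝ) (hτ : 1 ≤ τ) (hα : 0 ≤ α) (hατ : α * τ < 1)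
    (h t : ℝ) (hh : 0 < h) (hht : h ≤ t) :
    (∫ s in (-h)..(t - h),
        |(t - s - h) ^ (-α) -
            Set.indicator (Set.Icc (0 : ℝ) (t - h)) (fun s' => (t - s') ^ (-α)) s| ^ τ) ≤
      h ^ (1 - α * τ) / (1 - α * τ) := by
  have hτ0 : 0 < τ := lt_of_lt_of_le one_pos hτ
  have hβ : -1 < -(α * τ) := by nlinarith
  have hβ1 : (0:ℝ) < 1 - α * τ := by linarith
  have hab : -h ≤ t - h := by linarith
  set f : ℝ → ℝ := fun s =>
    |(t - s - h) ^ (-α) -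
        Set.indicator (Set.Icc (0 : ℝ) (t - h)) (fun s' => (t - s') ^ (-α)) s| ^ τ with hf_def
  set g : ℝ → ℝ := fun s =>
    (t - h - s) ^ (-(α * τ)) -
      Set.indicator (Set.Icc (0 : ℝ) (t - h)) (fun s' => (t - s') ^ (-(α * τ))) s with hg_def
  -- integrability of the pieces of g
  have hG1 : IntervalIntegrable (fun s => (t - h - s) ^ (-(α * τ))) volume (-h) (t - h) := by
    have := (intervalIntegrable_rpow' (a := t) (b := 0) hβ).comp_sub_left (t - h)
    simpa using this
  have hφcont : ContinuousOn (fun s' : ℝ => (t - s') ^ (-(α * τ))) (Set.uIcc (-h) (t - h)) := by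
    apply ContinuousOn.rpow_const
    · exact (continuous_const.sub continuous_id).continuousOn
    · intro x hx
      rw [Set.uIcc_of_le hab] at hx
      left
      linarith [hx.2]
  have hφ : IntervalIntegrable (fun s' : ℝ => (t - s') ^ (-(α * τ))) volume (-h) (t - h) :=
    hφcont.intervalIntegrable
  have hG2 : IntervalIntegrable
      (fun s => Set.indicator (Set.Icc (0 : ℝ) (t - h))
        (fun s' => (t - s') ^ (-(α * τ))) s) volume (-h) (t - h) := by
    rw [intervalIntegrable_iff] at hφ ⊢
    exact hφ.indicator measurableSet_Icc
  have hg_int : IntervalIntegrable g volume (-h) (t - h) := hG1.sub hG2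
  -- pointwise bound f ≤ g a.e. on Icc (-h) (t-h)
  have hae : ∀ᵐ s ∂(volume.restrict (Set.Icc (-h) (t - h))), f s ≤ g s := by
    have hne : ∀ᵐ s : ℝ, s ≠ t - h := by
      rw [ae_iff]
      simp [measure_singleton]
    filter_upwards [hne.filter_mono (ae_mono Measure.restrict_le_self),
      ae_restrict_mem measurableSet_Icc] with s hsne hsIcc
    have hs2 : s < t - h := lt_of_le_of_ne hsIcc.2 hsne
    have hpos : (0:ℝ) < t - s - h := by linarith
    simp only [hf_def, hg_def]
    rw [show t - s - h = t - h - s by ring]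
    have hpos' : (0:ℝ) < t - h - s := by linarith
    have hpow : ((t - h - s) ^ (-α)) ^ τ = (t - h - s) ^ (-(α * τ)) := by
      rw [← Real.rpow_mul hpos'.le, neg_mul]
    by_cases hs0 : s ∈ Set.Icc (0:ℝ) (t - h)
    · simp only [Set.indicator_of_mem hs0]
      have hposts : (0:ℝ) < t - s := by linarith
      have hle : (t - s) ^ (-α) ≤ (t - h - s) ^ (-α) :=
        Real.rpow_le_rpow_of_nonpos hpos' (by linarith) (neg_nonpos.mpr hα)
      have hb0 : (0:ℝ) ≤ (t - s) ^ (-α) := Real.rpow_nonneg hposts.le _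
      rw [abs_of_nonneg (by linarith)]
      have key := aux_add_rpow (x := (t - s) ^ (-α))
        (y := (t - h - s) ^ (-α) - (t - s) ^ (-α)) hb0 (by linarith) hτ
      rw [add_sub_cancel] at key
      have hpow' : ((t - s) ^ (-α)) ^ τ = (t - s) ^ (-(α * τ)) := by
        rw [← Real.rpow_mul hposts.le, neg_mul]
      rw [hpow, hpow'] at key
      linarith
    · simp only [Set.indicator_of_notMem hs0, sub_zero]
      rw [abs_of_nonneg (Real.rpow_nonneg hpos'.le _), hpow]
  -- f is interval integrable
  have hf_meas : AEStronglyMeasurable f (volume.restrict (Set.Ioc (-h) (t - h))) := by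
    have m1 : Measurable fun s : ℝ => (t - s - h) ^ (-α) :=
      ((measurable_const.sub measurable_id).sub measurable_const).pow measurable_const
    have m2 : Measurable fun s : ℝ =>
        Set.indicator (Set.Icc (0 : ℝ) (t - h)) (fun s' => (t - s') ^ (-α)) s :=
      Measurable.indicator ((measurable_const.sub measurable_id).pow measurable_const)
        measurableSet_Icc
    exact (((m1.sub m2).abs).pow measurable_const).aestronglyMeasurable
  have hf_int : IntervalIntegrable f volume (-h) (t - h) := by
    rw [intervalIntegrable_iff, Set.uIoc_of_le hab]
    have hg_int' : IntegrableOn g (Set.Ioc (-h) (t - h)) volume := by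
      rw [intervalIntegrable_iff, Set.uIoc_of_le hab] at hg_int
      exact hg_int
    apply hg_int'.mono' hf_meas
    filter_upwards [hae.filter_mono (ae_mono (Measure.restrict_mono Set.Ioc_subset_Icc_self
      le_rfl))] with s hs
    rw [Real.norm_eq_abs, abs_of_nonneg (Real.rpow_nonneg (abs_nonneg _) _)]
    exact hs
  -- compare the integrals
  have hmono : (∫ s in (-h)..(t - h), f s) ≤ ∫ s in (-h)..(t - h), g s :=
    integral_mono_ae_restrict hab hf_int hg_int hae
  -- compute ∫ g
  have hI1 : (∫ s in (-h)..(t - h), (t - h - s) ^ (-(α * τ))) =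
      t ^ (1 - α * τ) / (1 - α * τ) := by
    rw [integral_comp_sub_left (fun x => x ^ (-(α * τ))) (t - h)]
    simp only [sub_self, sub_neg_eq_add, sub_add_cancel]
    rw [integral_rpow (Or.inl hβ)]
    rw [Real.zero_rpow (by linarith : -(α * τ) + 1 ≠ 0)]
    rw [neg_add_eq_sub]
    ring_nf
  have hI2 : (∫ s in (-h)..(t - h), Set.indicator (Set.Icc (0 : ℝ) (t - h))
      (fun s' => (t - s') ^ (-(α * τ))) s) =
      (t ^ (1 - α * τ) - h ^ (1 - α * τ)) / (1 - α * τ) := by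
    rw [integral_of_le hab, setIntegral_indicator measurableSet_Icc]
    have hset : Set.Ioc (-h) (t - h) ∩ Set.Icc (0:ℝ) (t - h) = Set.Icc (0:ℝ) (t - h) := by
      ext x
      simp only [Set.mem_inter_iff, Set.mem_Ioc, Set.mem_Icc]
      constructor
      · rintro ⟨_, hx⟩; exact hx
      · rintro ⟨hx0, hx1⟩; exact ⟨⟨by linarith, hx1⟩, hx0, hx1⟩
    rw [hset, integral_Icc_eq_integral_Ioc, ← integral_of_le (by linarith : (0:ℝ) ≤ t - h)]
    rw [integral_comp_sub_left (fun x => x ^ (-(α * τ))) t]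
    simp only [sub_zero, sub_sub_cancel]
    rw [integral_rpow (Or.inl hβ), neg_add_eq_sub]
  have hg_val : (∫ s in (-h)..(t - h), g s) = h ^ (1 - α * τ) / (1 - α * τ) := by
    rw [hg_def]
    rw [integral_sub hG1 hG2, hI1, hI2]
    ring
  calc (∫ s in (-h)..(t - h), f s) ≤ ∫ s in (-h)..(t - h), g s := hmono
    _ = h ^ (1 - α * τ) / (1 - α * τ) := hg_val
end
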